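/- arXiv:2504.12874 — 6 statements merged into one kernel-verified Lean document; each statement's English description precedes it below -/
import Mathlib

section
/- Let M be an object of Morph(Mod-R), i.e. an R-linear map μ_M : M0 → M1 between right R-modules, and suppose that End(M0) and End(M1) are semilocal rings. Then the endomorphism ring E_M of M in Morph(Mod-R) is a semilocal ring. -/
universe u

/-- The endomorphism ring `E_M` of an object `μ : M₀ → M₁` of the morphism category
`Morph(Mod-A)`: pairs `(u₀, u₁)` of endomorphisms with `u₁ ∘ μ = μ ∘ u₀`, as a subring of
`End(M₀) × End(M₁)`. -/
def MorphEnd {A : Type u} [Ring A] {M₀ M₁ : Type u} [AddCommGroup M₀] [AddCommGroup M₁]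
    [Module A M₀] [Module A M₁] (μ : M₀ →ₗ[A] M₁) :
    Subring (Module.End A M₀ × Module.End A M₁) where
  carrier := {u | ∀ x, u.2 (μ x) = μ (u.1 x)}
  mul_mem' {a b} ha hb := fun x => by
    show (a.2 * b.2) (μ x) = μ ((a.1 * b.1) x)
    rw [Module.End.mul_apply, Module.End.mul_apply, hb x, ha (b.1 x)]
  one_mem' := fun x => rfl
  add_mem' {a b} ha hb := fun x => by
    show (a.2 + b.2) (μ x) = μ ((a.1 + b.1) x)
    rw [LinearMap.add_apply, LinearMap.add_apply, map_add, ha x, hb x]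
  zero_mem' := fun x => by
    show (0 : Module.End _ _) (μ x) = μ ((0 : Module.End _ _) x)
    simp
  neg_mem' {a} ha := fun x => by
    show (-a.2) (μ x) = μ ((-a.1) x)
    simp [ha x]

/-- A ring `S` is semilocal if `S/J(S)` is a semisimple (artinian) ring, where `J(S)` is
the Jacobson radical of `S`. -/
def IsSemilocalRing (S : Type*) [Ring S] : Prop :=
  IsSemisimpleRing ((⊥ : TwoSidedIdeal S).jacobson.ringCon).Quotient


variable {T : Type*} [Ring T]

/-- Elements of the Jacobson radical are quasi-regular: `1 - x` is a unit. -/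
lemma aux_isUnit_one_sub_of_mem_jacobson {x : T}
    (hx : x ∈ (⊥ : TwoSidedIdeal T).jacobson) : IsUnit (1 - x) := by
  have key : ∀ y ∈ (⊥ : TwoSidedIdeal T).jacobson, ∃ z : T, z * (1 - y) = 1 := by
    intro y hy
    obtain ⟨z, hz⟩ := (TwoSidedIdeal.mem_jacobson_iff.1 hy) (-1)
    rw [TwoSidedIdeal.mem_bot] at hz
    refine ⟨z, ?_⟩
    have : z * (1 - y) = z * (-1) * y + z := by noncomm_ring
    rw [this, ← sub_eq_zero]
    simpa using hz
  obtain ⟨z, hz⟩ := key x hx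
  have hzx : z * x ∈ (⊥ : TwoSidedIdeal T).jacobson :=
    TwoSidedIdeal.mul_mem_left _ _ _ hx
  obtain ⟨z', hz'⟩ := key (- (z * x)) (TwoSidedIdeal.neg_mem _ hzx)
  have hz1 : z = 1 + z * x := by
    have h := hz
    rw [mul_sub, mul_one, sub_eq_iff_eq_add] at h
    exact h
  have hz'z : z' * z = 1 := by
    rw [hz1]
    have h' := hz'
    rw [sub_neg_eq_add] at h'
    exact h'
  -- z is a unit with inverse 1 - x
  have hleft : (1 - x) * z = 1 := by
    have : z' = z' * (z * (1 - x)) := by rw [hz, mul_one]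
    rw [← mul_assoc, hz'z, one_mul] at this
    rw [← this, hz'z]
  exact ⟨⟨1 - x, z, hleft, hz⟩, rfl⟩

lemma aux_mk_surjective :
    Function.Surjective ((⊥ : TwoSidedIdeal T).jacobson.ringCon.mk') := by
  intro y
  obtain ⟨x⟩ := y
  exact ⟨x, rfl⟩

lemma aux_mk_eq_mk {x y : T} :
    (⊥ : TwoSidedIdeal T).jacobson.ringCon.mk' x
      = (⊥ : TwoSidedIdeal T).jacobson.ringCon.mk' y
    ↔ x - y ∈ (⊥ : TwoSidedIdeal T).jacobson :=
  (RingCon.eq _).trans (TwoSidedIdeal.rel_iff _ _ _)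

lemma aux_mk_eq_zero {x : T} :
    (⊥ : TwoSidedIdeal T).jacobson.ringCon.mk' x = 0
    ↔ x ∈ (⊥ : TwoSidedIdeal T).jacobson := by
  have : ((⊥ : TwoSidedIdeal T).jacobson.ringCon.mk') (0 : T) = 0 := map_zero _
  rw [← this, aux_mk_eq_mk, sub_zero]

lemma aux_isUnit_of_mk' {x : T}
    (h : IsUnit ((⊥ : TwoSidedIdeal T).jacobson.ringCon.mk' x)) : IsUnit x := by
  obtain ⟨u, hu⟩ := h
  obtain ⟨y, hy⟩ := aux_mk_surjective (T := T) ((u⁻¹ : _) : _)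
  have hxy : IsUnit (x * y) := by
    have h1 : (⊥ : TwoSidedIdeal T).jacobson.ringCon.mk' (x * y) = 1 := by
      rw [map_mul, ← hu, hy, u.mul_inv]
    have hm : x * y - 1 ∈ (⊥ : TwoSidedIdeal T).jacobson := by
      rw [← aux_mk_eq_mk, map_one, h1]
    have := aux_isUnit_one_sub_of_mem_jacobson (TwoSidedIdeal.neg_mem _ hm)
    simpa [sub_neg_eq_add] using this
  have hyx : IsUnit (y * x) := by
    have h1 : (⊥ : TwoSidedIdeal T).jacobson.ringCon.mk' (y * x) = 1 := by
      rw [map_mul, ← hu, hy, u.inv_mul]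
    have hm : y * x - 1 ∈ (⊥ : TwoSidedIdeal T).jacobson := by
      rw [← aux_mk_eq_mk, map_one, h1]
    have := aux_isUnit_one_sub_of_mem_jacobson (TwoSidedIdeal.neg_mem _ hm)
    simpa [sub_neg_eq_add] using this
  obtain ⟨U, hU⟩ := hxy
  obtain ⟨V, hV⟩ := hyx
  have hv : x * (y * ↑U⁻¹) = 1 := by rw [← mul_assoc, ← hU, U.mul_inv]
  have hw : (↑V⁻¹ * y) * x = 1 := by rw [mul_assoc, ← hV, V.inv_mul]
  have hvw : (y * ↑U⁻¹ : T) = ↑V⁻¹ * y := by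
    calc (y * ↑U⁻¹ : T) = ((↑V⁻¹ * y) * x) * (y * ↑U⁻¹) := by rw [hw, one_mul]
      _ = (↑V⁻¹ * y) * (x * (y * ↑U⁻¹)) := by noncomm_ring
      _ = ↑V⁻¹ * y := by rw [hv, mul_one]
  exact ⟨⟨x, y * ↑U⁻¹, hv, by rw [hvw]; exact hw⟩, rfl⟩

section QSide

variable {Q : Type*} [Ring Q]

/-- In a ring that is artinian as a module over itself, a nonunit has a nonzero
left annihilator. -/
lemma aux_exists_left_ann [IsArtinian Q Q] {q : Q} (h : ¬ IsUnit q) :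
    ∃ w : Q, w ≠ 0 ∧ w * q = 0 := by
  by_contra hw
  push_neg at hw
  have hinj : Function.Injective (LinearMap.toSpanSingleton Q Q q) := by
    intro a b hab
    simp only [LinearMap.toSpanSingleton_apply, smul_eq_mul] at hab
    by_contra hne
    exact (hw (a - b) (sub_ne_zero.2 hne)) (by rw [sub_mul, hab, sub_self])
  have hsurj := IsArtinian.surjective_of_injective_endomorphism _ hinj
  obtain ⟨b, hb⟩ := hsurj 1
  simp only [LinearMap.toSpanSingleton_apply, smul_eq_mul] at hb
  have hqb : q * b = 1 := by
    apply hinj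
    simp only [LinearMap.toSpanSingleton_apply, smul_eq_mul]
    rw [mul_assoc, hb, mul_one, one_mul]
  exact h ⟨⟨q, b, hqb, hb⟩, rfl⟩

/-- The key kernel-growth step. -/
lemma aux_ker_step [IsArtinian Q Q] {A B : Q} (h : ¬ IsUnit (1 - B * A)) :
    LinearMap.ker (LinearMap.toSpanSingleton Q Q A) <
      LinearMap.ker (LinearMap.toSpanSingleton Q Q (A * (1 - B * A))) := by
  obtain ⟨w, hw0, hw⟩ := aux_exists_left_ann h
  have hwBA : w * B * A = w := by
    have : w * 1 - w * (B * A) = 0 := by rw [← mul_sub]; exact hw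
    rw [mul_one, sub_eq_zero] at this
    rw [mul_assoc, ← this]
  rw [lt_iff_le_and_ne]
  constructor
  · intro t ht
    simp only [LinearMap.mem_ker, LinearMap.toSpanSingleton_apply, smul_eq_mul] at ht ⊢
    rw [← mul_assoc, ht, zero_mul]
  · intro hEq
    have hmem : (w * B) ∈ LinearMap.ker
        (LinearMap.toSpanSingleton Q Q (A * (1 - B * A))) := by
      simp only [LinearMap.mem_ker, LinearMap.toSpanSingleton_apply, smul_eq_mul]
      rw [← mul_assoc, hwBA, hw]
    rw [← hEq] at hmem
    simp only [LinearMap.mem_ker, LinearMap.toSpanSingleton_apply, smul_eq_mul] at hmem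
    rw [hwBA] at hmem
    exact hw0 hmem

end QSide

section Quasi

variable {S : Type*} {Q : Type*} [Ring S] [Ring Q]

/-- Regularity modulo the Jacobson radical, via a local homomorphism into a
noetherian+artinian (e.g. semisimple) ring. -/
lemma aux_exists_quasiInverse [IsArtinian Q Q] [IsNoetherian Q Q]
    (f : S →+* Q) (hf : ∀ s, IsUnit (f s) → IsUnit s) (a : S) :
    ∃ b : S, a - a * b * a ∈ (⊥ : TwoSidedIdeal S).jacobson := by
  obtain ⟨N, hNr, hmax⟩ := (set_has_maximal_iff_noetherian.2 ‹IsNoetherian Q Q›)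
    (Set.range fun b : S =>
      LinearMap.ker (LinearMap.toSpanSingleton Q Q (f (a - a * b * a))))
    ⟨_, ⟨0, rfl⟩⟩
  obtain ⟨b₀, hb₀⟩ := hNr
  refine ⟨b₀, ?_⟩
  by_contra hc
  rw [TwoSidedIdeal.mem_jacobson_iff] at hc
  push_neg at hc
  obtain ⟨y, hy⟩ := hc
  set cS := a - a * b₀ * a with hcS
  have hnu : ¬ IsUnit (1 + y * cS) := by
    intro hu
    obtain ⟨v, hv⟩ : ∃ v : S, v * (1 + y * cS) = 1 := ⟨↑hu.unit⁻¹, hu.unit.inv_val⟩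
    refine hy v ?_
    rw [TwoSidedIdeal.mem_bot]
    have : v * y * cS + v - 1 = v * (1 + y * cS) - 1 := by noncomm_ring
    rw [this, hv, sub_self]
  have hQ : ¬ IsUnit (1 - f (-y) * f cS) := by
    intro h
    refine hnu (hf _ ?_)
    have : f (1 + y * cS) = 1 - f (-y) * f cS := by
      rw [map_add, map_one, map_mul, map_neg, neg_mul, sub_neg_eq_add]
    rw [this]
    exact h
  have hlt := aux_ker_step (Q := Q) hQ
  have hfx : f cS * (1 - f (-y) * f cS) =
      f (a - a * (b₀ - (1 - b₀ * a) * y * (1 - a * b₀)) * a) := by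
    rw [show (1 : Q) - f (-y) * f cS = f (1 + y * cS) by
      rw [map_add, map_one, map_mul, map_neg, neg_mul, sub_neg_eq_add]]
    rw [← map_mul]
    congr 1
    rw [hcS]
    noncomm_ring
  rw [hfx] at hlt
  exact hmax _ ⟨b₀ - (1 - b₀ * a) * y * (1 - a * b₀), rfl⟩ (hb₀ ▸ hlt)

end Quasi

section Main

theorem aux_isSemilocal_of_local {S : Type*} {Q : Type*} [Ring S] [Ring Q]
    [IsSemisimpleRing Q] (f : S →+* Q) (hf : ∀ s, IsUnit (f s) → IsUnit s) :
    IsSemilocalRing S := by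
  classical
  haveI hart : IsArtinian Q Q := inferInstance
  haveI hnoe : IsNoetherian Q Q := inferInstance
  show IsSemisimpleRing ((⊥ : TwoSidedIdeal S).jacobson.ringCon).Quotient
  set c := (⊥ : TwoSidedIdeal S).jacobson.ringCon with hcdef
  -- von Neumann regularity of the quotient
  have hreg : ∀ x : c.Quotient, ∃ y : c.Quotient, x * y * x = x := by
    intro x
    obtain ⟨a, rfl⟩ := aux_mk_surjective (T := S) x
    obtain ⟨b, hb⟩ := aux_exists_quasiInverse f hf a
    refine ⟨c.mk' b, ?_⟩
    have h0 : c.mk' (a - a * b * a) = 0 := (aux_mk_eq_zero).2 hb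
    rw [map_sub, map_mul, map_mul, sub_eq_zero] at h0
    exact h0.symm
  -- every left ideal of the quotient is generated by an idempotent
  have key : ∀ N : Submodule c.Quotient c.Quotient,
      ∃ e : c.Quotient, e * e = e ∧ N = Submodule.span c.Quotient {e} := by
    intro N
    by_contra hN
    push_neg at hN
    have step : ∀ e : c.Quotient, e * e = e → Submodule.span c.Quotient {e} ≤ N →
        ∃ e' : c.Quotient, (e' * e' = e' ∧ Submodule.span c.Quotient {e'} ≤ N) ∧
          e * e' = e ∧ e' * e = e ∧ e' ≠ e := by
      intro e he heN
      obtain ⟨a, haN, ha⟩ := SetLike.exists_of_lt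
        (lt_of_le_of_ne heN fun hh => hN e he hh.symm)
      obtain ⟨y, hy⟩ := hreg (a - a * e)
      set g := a - a * e with hgdef
      have heMem : e ∈ N := heN (Submodule.mem_span_singleton_self e)
      have hge : g * e = 0 := by
        rw [hgdef, sub_mul, mul_assoc, he, sub_self]
      set h := y * g with hhdef
      have hgh : g * h = g := by rw [hhdef, ← mul_assoc]; exact hy
      have hhh : h * h = h := by
        rw [hhdef, mul_assoc y g (y * g), ← mul_assoc g y g, hy]
      have hhe : h * e = 0 := by rw [hhdef, mul_assoc, hge, mul_zero]
      set e' := e + h - e * h with he'def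
      have expandL : ∀ z : c.Quotient, e' * z = e * z + h * z - e * h * z := by
        intro z; rw [he'def]; noncomm_ring
      have expandR : ∀ z : c.Quotient, z * e' = z * e + z * h - z * (e * h) := by
        intro z; rw [he'def]; noncomm_ring
      have hee' : e * e' = e := by
        rw [expandR e, ← mul_assoc e e h, he]; abel
      have he'e : e' * e = e := by
        rw [expandL e, mul_assoc e h e, hhe, mul_zero, he]; abel
      have hhe' : h * e' = h := by
        rw [expandR h, ← mul_assoc h e h, hhe, zero_mul, hhh]; abel
      have he'e' : e' * e' = e' := by
        rw [expandL e', hee', mul_assoc e h e', hhe', he'def]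
      have hge' : g * e' = g := by
        rw [expandR g, hgh, ← mul_assoc g e h, hge, zero_mul]; abel
      have haMem : a ∈ Submodule.span c.Quotient {e'} := by
        refine Submodule.mem_span_singleton.2 ⟨a * e + g, ?_⟩
        rw [smul_eq_mul, add_mul, mul_assoc a e e', hee', hge', hgdef]
        noncomm_ring
      have haeN : a * e ∈ N := by
        have := N.smul_mem a heMem
        rwa [smul_eq_mul] at this
      have hgN : g ∈ N := by rw [hgdef]; exact N.sub_mem haN haeN
      have hhN : h ∈ N := by
        rw [hhdef, ← smul_eq_mul]; exact N.smul_mem y hgN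
      have he'N : e' ∈ N := by
        rw [he'def]
        refine N.sub_mem (N.add_mem heMem hhN) ?_
        rw [← smul_eq_mul]; exact N.smul_mem e hhN
      refine ⟨e', ⟨he'e', ?_⟩, hee', he'e, fun hEq => ha (hEq ▸ haMem)⟩
      rw [Submodule.span_le, Set.singleton_subset_iff]; exact he'N
    -- build an infinite chain of idempotents
    have step' : ∀ p : {e : c.Quotient // e * e = e ∧ Submodule.span c.Quotient {e} ≤ N},
        ∃ q : {e : c.Quotient // e * e = e ∧ Submodule.span c.Quotient {e} ≤ N},
          p.1 * q.1 = p.1 ∧ q.1 * p.1 = p.1 ∧ q.1 ≠ p.1 := by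
      rintro ⟨e, he, heN⟩
      obtain ⟨e', ⟨h1, h2⟩, h3, h4, h5⟩ := step e he heN
      exact ⟨⟨e', h1, h2⟩, h3, h4, by simpa using h5⟩
    choose F hF1 hF2 hF3 using step'
    have hp0 : ((0 : c.Quotient) * 0 = 0 ∧
        Submodule.span c.Quotient {(0 : c.Quotient)} ≤ N) := by
      constructor
      · rw [mul_zero]
      · rw [Submodule.span_le, Set.singleton_subset_iff]; exact N.zero_mem
    set E : ℕ → {e : c.Quotient // e * e = e ∧ Submodule.span c.Quotient {e} ≤ N} :=
      fun n => F^[n] ⟨0, hp0⟩ with hEdef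
    have hEsucc : ∀ n, E (n + 1) = F (E n) := fun n => Function.iterate_succ_apply' F n _
    have hcons : ∀ n, (E n).1 * (E (n+1)).1 = (E n).1 ∧
        (E (n+1)).1 * (E n).1 = (E n).1 ∧ (E (n+1)).1 ≠ (E n).1 := by
      intro n; rw [hEsucc n]; exact ⟨hF1 _, hF2 _, hF3 _⟩
    choose σ hσ using fun n : ℕ => aux_mk_surjective (T := S) ((E (n+1)).1 - (E n).1)
    set x : ℕ → S := fun n =>
      Nat.rec (motive := fun _ => S) 1 (fun m xm => xm - xm * σ m * xm) n with hxdef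
    have hx0 : x 0 = 1 := rfl
    have hxsucc : ∀ n, x (n + 1) = x n - x n * σ n * x n := fun n => rfl
    have hπx : ∀ n, c.mk' (x n) = 1 - (E n).1 := by
      intro n
      induction n with
      | zero =>
        have : (E 0).1 = 0 := rfl
        rw [hx0, map_one, this, sub_zero]
      | succ n ih =>
        obtain ⟨hc1, hc2, _⟩ := hcons n
        have hen : (E n).1 * (E n).1 = (E n).1 := (E n).2.1
        rw [hxsucc, map_sub, map_mul, map_mul, ih, hσ n]
        have hA : (1 - (E n).1) * ((E (n+1)).1 - (E n).1) = (E (n+1)).1 - (E n).1 := by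
          rw [sub_mul, one_mul, mul_sub, hc1, hen, sub_self, sub_zero]
        have hB : ((E (n+1)).1 - (E n).1) * (1 - (E n).1) = (E (n+1)).1 - (E n).1 := by
          rw [mul_sub, mul_one, sub_mul, hc2, hen, sub_self, sub_zero]
        rw [hA, hB]
        abel
    have hmono : ∀ n, LinearMap.ker (LinearMap.toSpanSingleton Q Q (f (x n))) <
        LinearMap.ker (LinearMap.toSpanSingleton Q Q (f (x (n+1)))) := by
      intro n
      obtain ⟨hc1, hc2, hc3⟩ := hcons n
      have hen : (E n).1 * (E n).1 = (E n).1 := (E n).2.1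
      have hgne : (E (n+1)).1 - (E n).1 ≠ 0 := sub_ne_zero.2 hc3
      have hgidem : ((E (n+1)).1 - (E n).1) * ((E (n+1)).1 - (E n).1)
          = (E (n+1)).1 - (E n).1 := by
        rw [sub_mul, mul_sub, mul_sub, (E (n+1)).2.1, hc1, hc2, hen]
        abel
      have hnu : ¬ IsUnit (1 - σ n * x n) := by
        intro hu
        have hu2 : IsUnit (c.mk' (1 - σ n * x n)) := hu.map _
        rw [map_sub, map_one, map_mul, hσ n, hπx n] at hu2
        have hB : ((E (n+1)).1 - (E n).1) * (1 - (E n).1) = (E (n+1)).1 - (E n).1 := by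
          rw [mul_sub, mul_one, sub_mul, hc2, hen, sub_self, sub_zero]
        rw [hB] at hu2
        obtain ⟨v, hv⟩ : ∃ v, v * (1 - ((E (n+1)).1 - (E n).1)) = 1 :=
          ⟨↑hu2.unit⁻¹, hu2.unit.inv_val⟩
        apply hgne
        calc (E (n+1)).1 - (E n).1
            = (v * (1 - ((E (n+1)).1 - (E n).1))) * ((E (n+1)).1 - (E n).1) := by
              rw [hv, one_mul]
          _ = v * (((E (n+1)).1 - (E n).1) - ((E (n+1)).1 - (E n).1) *
                ((E (n+1)).1 - (E n).1)) := by noncomm_ring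
          _ = 0 := by rw [hgidem, sub_self, mul_zero]
      have hnuQ : ¬ IsUnit (1 - f (σ n) * f (x n)) := fun hQu =>
        hnu (hf _ (by rw [map_sub, map_one, map_mul]; exact hQu))
      have hlt := aux_ker_step (Q := Q) hnuQ
      have hfx : f (x n) * (1 - f (σ n) * f (x n)) = f (x (n+1)) := by
        rw [hxsucc n, map_sub, map_mul, map_mul]
        noncomm_ring
      rwa [hfx] at hlt
    obtain ⟨n, hstab⟩ := monotone_stabilizes_iff_noetherian.2 hnoe
      ⟨fun n => LinearMap.ker (LinearMap.toSpanSingleton Q Q (f (x n))),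
        monotone_nat_of_le_succ fun n => (hmono n).le⟩
    exact (hmono n).ne (hstab (n+1) (Nat.le_succ n))
  -- conclude: complemented lattice
  refine (isSemisimpleModule_iff _ _).2 ⟨fun N => ?_⟩
  obtain ⟨e, he, rfl⟩ := key N
  refine ⟨Submodule.span c.Quotient {1 - e}, ?_, ?_⟩
  · rw [Submodule.disjoint_def]
    intro x hx hx'
    obtain ⟨r, hr⟩ := Submodule.mem_span_singleton.1 hx
    obtain ⟨r', hr'⟩ := Submodule.mem_span_singleton.1 hx'
    rw [smul_eq_mul] at hr hr'
    have h1 : x * e = x := by rw [← hr, mul_assoc, he]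
    have h2 : x * e = 0 := by
      rw [← hr', mul_assoc, sub_mul, one_mul, he, sub_self, mul_zero]
    rw [← h1, h2]
  · rw [codisjoint_iff_le_sup]
    intro z _
    have hz : z = z * e + z * (1 - e) := by noncomm_ring
    rw [hz]
    refine Submodule.add_mem _ (Submodule.mem_sup_left ?_) (Submodule.mem_sup_right ?_)
    · exact Submodule.mem_span_singleton.2 ⟨z, by rw [smul_eq_mul]⟩
    · exact Submodule.mem_span_singleton.2 ⟨z, by rw [smul_eq_mul]⟩

end Main

theorem morphEnd_semilocal (R : Type u) [Ring R] (M₀ M₁ : Type u)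
    [AddCommGroup M₀] [AddCommGroup M₁] [Module Rᵐᵒᵖ M₀] [Module Rᵐᵒᵖ M₁]
    (μ : M₀ →ₗ[Rᵐᵒᵖ] M₁)
    (h₀ : IsSemilocalRing (Module.End Rᵐᵒᵖ M₀))
    (h₁ : IsSemilocalRing (Module.End Rᵐᵒᵖ M₁)) :
    IsSemilocalRing (MorphEnd μ) := by
  classical
  haveI hA : IsSemisimpleRing
      ((⊥ : TwoSidedIdeal (Module.End Rᵐᵒᵖ M₀)).jacobson.ringCon).Quotient := h₀
  haveI hB : IsSemisimpleRing
      ((⊥ : TwoSidedIdeal (Module.End Rᵐᵒᵖ M₁)).jacobson.ringCon).Quotient := h₁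
  let πA := (⊥ : TwoSidedIdeal (Module.End Rᵐᵒᵖ M₀)).jacobson.ringCon.mk'
  let πB := (⊥ : TwoSidedIdeal (Module.End Rᵐᵒᵖ M₁)).jacobson.ringCon.mk'
  let f := (RingHom.prod (πA.comp (RingHom.fst _ _)) (πB.comp (RingHom.snd _ _))).comp
      (MorphEnd μ).subtype
  refine aux_isSemilocal_of_local f ?_
  rintro ⟨⟨u₀, u₁⟩, hu⟩ hs
  have hu' : ∀ x, u₁ (μ x) = μ (u₀ x) := hu
  have h0 : IsUnit (πA u₀) := by
    have := hs.map (RingHom.fst _ _)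
    simpa [f] using this
  have h1 : IsUnit (πB u₁) := by
    have := hs.map (RingHom.snd _ _)
    simpa [f] using this
  obtain ⟨U, hU⟩ := aux_isUnit_of_mk' h0
  obtain ⟨V, hV⟩ := aux_isUnit_of_mk' h1
  have hUinv : ∀ x : M₀, u₀ ((↑U⁻¹ : Module.End Rᵐᵒᵖ M₀) x) = x := by
    intro x
    rw [← Module.End.mul_apply, ← hU, U.mul_inv, Module.End.one_apply]
  have hVinv : ∀ z : M₁, (↑V⁻¹ : Module.End Rᵐᵒᵖ M₁) (u₁ z) = z := by
    intro z
    rw [← Module.End.mul_apply, ← hV, V.inv_mul, Module.End.one_apply]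
  have compat : ((↑U⁻¹ : Module.End Rᵐᵒᵖ M₀), (↑V⁻¹ : Module.End Rᵐᵒᵖ M₁)) ∈ MorphEnd μ := by
    intro x
    show (↑V⁻¹ : Module.End Rᵐᵒᵖ M₁) (μ x) = μ ((↑U⁻¹ : Module.End Rᵐᵒᵖ M₀) x)
    have h1x := hu' ((↑U⁻¹ : Module.End Rᵐᵒᵖ M₀) x)
    rw [hUinv x] at h1x
    rw [← h1x, hVinv]
  refine ⟨⟨⟨(u₀, u₁), hu⟩, ⟨(↑U⁻¹, ↑V⁻¹), compat⟩, ?_, ?_⟩, rfl⟩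
  · apply Subtype.ext
    apply Prod.ext
    · show u₀ * ↑U⁻¹ = 1
      rw [← hU, U.mul_inv]
    · show u₁ * ↑V⁻¹ = 1
      rw [← hV, V.mul_inv]
  · apply Subtype.ext
    apply Prod.ext
    · show ↑U⁻¹ * u₀ = 1
      rw [← hU, U.inv_mul]
    · show ↑V⁻¹ * u₁ = 1
      rw [← hV, V.inv_mul]
end

section
/- Let M be an object of Morph(Mod-R), i.e. an R-linear map μ_M : M0 → M1 between right R-modules. Suppose End(M0) is a ring of type n with maximal right ideals I_1, …, I_n and End(M1) is a ring of type m with maximal right ideals K_1, …, K_m. Then the endomorphism ring E_M of M in Morph(Mod-R) is a ring of type at most n + m, and every maximal right ideal of E_M is among the completely prime two-sided ideals (I_t × End(M1)) ∩ E_M (t = 1, …, n) and (End(M0) × K_q) ∩ E_M (q = 1, …, m), where E_M is identified with its image in End(M0) × End(M1) via the canonical embedding (u0, u1) ↦ (u0, u1). -/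
universe u

/-- `J` is a right ideal of the ring `A` (as a set). -/
def IsRightIdealSet {A : Type*} [Ring A] (J : Set A) : Prop :=
  (0 : A) ∈ J ∧ (∀ x ∈ J, ∀ y ∈ J, x + y ∈ J) ∧ (∀ x ∈ J, ∀ a : A, x * a ∈ J) ∧
    ∀ x ∈ J, -x ∈ J

/-- `J` is a maximal right ideal of the ring `A`. -/
def IsMaxRightIdealSet {A : Type*} [Ring A] (J : Set A) : Prop :=
  IsRightIdealSet J ∧ J ≠ Set.univ ∧
    ∀ K : Set A, IsRightIdealSet K → J ⊆ K → K ≠ Set.univ → K = J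

/-- `J` is a left ideal of the ring `A` (as a set). -/
def IsLeftIdealSet {A : Type*} [Ring A] (J : Set A) : Prop :=
  (0 : A) ∈ J ∧ (∀ x ∈ J, ∀ y ∈ J, x + y ∈ J) ∧ (∀ x ∈ J, ∀ a : A, a * x ∈ J) ∧
    ∀ x ∈ J, -x ∈ J

/-- `J` is a maximal left ideal of the ring `A`. -/
def IsMaxLeftIdealSet {A : Type*} [Ring A] (J : Set A) : Prop :=
  IsLeftIdealSet J ∧ J ≠ Set.univ ∧
    ∀ K : Set A, IsLeftIdealSet K → J ⊆ K → K ≠ Set.univ → K = J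

/-- `J` is a two-sided ideal of the ring `A` (as a set). -/
def IsTwoSidedIdealSet {A : Type*} [Ring A] (J : Set A) : Prop :=
  IsRightIdealSet J ∧ ∀ x ∈ J, ∀ a : A, a * x ∈ J

/-- `J` is a completely prime (proper, two-sided) ideal of the ring `A`: for all
`x, y ∈ A`, `x * y ∈ J` implies `x ∈ J` or `y ∈ J`. -/
def IsCompletelyPrimeIdealSet {A : Type*} [Ring A] (J : Set A) : Prop :=
  IsTwoSidedIdealSet J ∧ J ≠ Set.univ ∧ ∀ x y : A, x * y ∈ J → x ∈ J ∨ y ∈ J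

/-- A ring `A` is of type `n` if it has exactly `n` maximal right ideals and these are
all two-sided ideals. -/
def RingOfType (A : Type*) [Ring A] (n : ℕ) : Prop :=
  ∃ s : Finset (Set A), s.card = n ∧ (∀ J : Set A, IsMaxRightIdealSet J ↔ J ∈ s) ∧
    ∀ J ∈ s, IsTwoSidedIdealSet J

section Aux

variable {A : Type*} [Ring A]

lemma rightIdeal_eq_univ_of_one_mem {J : Set A} (hJ : IsRightIdealSet J)
    (h1 : (1 : A) ∈ J) : J = Set.univ :=
  Set.eq_univ_of_forall fun a => by simpa using hJ.2.2.1 1 h1 a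

lemma one_notMem_of_ne_univ {J : Set A} (hJ : IsRightIdealSet J)
    (hne : J ≠ Set.univ) : (1 : A) ∉ J :=
  fun h1 => hne (rightIdeal_eq_univ_of_one_mem hJ h1)

lemma cp_of_max_twoSided {J : Set A} (hmax : IsMaxRightIdealSet J)
    (h2 : IsTwoSidedIdealSet J) : IsCompletelyPrimeIdealSet J := by
  refine ⟨h2, hmax.2.1, fun x y hxy => ?_⟩
  by_cases hx : x ∈ J
  · exact Or.inl hx
  right
  have hKideal : IsRightIdealSet {z : A | x * z ∈ J} := by
    refine ⟨by simp [h2.1.1], fun a ha b hb => ?_, fun a ha c => ?_, fun a ha => ?_⟩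
    · simpa [mul_add] using h2.1.2.1 _ ha _ hb
    · simpa [← mul_assoc] using h2.1.2.2.1 _ ha c
    · simpa using h2.1.2.2.2 _ ha
  have hJK : J ⊆ {z : A | x * z ∈ J} := fun j hj => h2.2 j hj x
  have hKne : {z : A | x * z ∈ J} ≠ Set.univ := fun h => hx (by
    have h1 : (1 : A) ∈ {z : A | x * z ∈ J} := h ▸ Set.mem_univ 1
    simpa using h1)
  have heq := hmax.2.2 _ hKideal hJK hKne
  have hy : y ∈ {z : A | x * z ∈ J} := hxy
  rwa [heq] at hy

lemma exists_max_rightIdeal {J : Set A} (hJ : IsRightIdealSet J) (h1 : (1 : A) ∉ J) :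
    ∃ M, IsMaxRightIdealSet M ∧ J ⊆ M := by
  have hzorn : ∀ c ⊆ {K : Set A | IsRightIdealSet K ∧ (1 : A) ∉ K},
      IsChain (· ⊆ ·) c → c.Nonempty →
      ∃ ub ∈ {K : Set A | IsRightIdealSet K ∧ (1 : A) ∉ K}, ∀ s ∈ c, s ⊆ ub := by
    intro c hcS hchain hcne
    refine ⟨⋃₀ c, ⟨⟨?_, ?_, ?_, ?_⟩, ?_⟩, fun s hs => Set.subset_sUnion_of_mem hs⟩
    · obtain ⟨Kc, hKc⟩ := hcne
      exact Set.mem_sUnion.mpr ⟨Kc, hKc, (hcS hKc).1.1⟩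
    · rintro a ha b hb
      obtain ⟨Ka, hKa, haK⟩ := Set.mem_sUnion.mp ha
      obtain ⟨Kb, hKb, hbK⟩ := Set.mem_sUnion.mp hb
      rcases hchain.total hKa hKb with h | h
      · exact Set.mem_sUnion.mpr ⟨Kb, hKb, (hcS hKb).1.2.1 a (h haK) b hbK⟩
      · exact Set.mem_sUnion.mpr ⟨Ka, hKa, (hcS hKa).1.2.1 a haK b (h hbK)⟩
    · rintro a ha r
      obtain ⟨Ka, hKa, haK⟩ := Set.mem_sUnion.mp ha
      exact Set.mem_sUnion.mpr ⟨Ka, hKa, (hcS hKa).1.2.2.1 a haK r⟩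
    · rintro a ha
      obtain ⟨Ka, hKa, haK⟩ := Set.mem_sUnion.mp ha
      exact Set.mem_sUnion.mpr ⟨Ka, hKa, (hcS hKa).1.2.2.2 a haK⟩
    · intro hone
      obtain ⟨Ka, hKa, haK⟩ := Set.mem_sUnion.mp hone
      exact (hcS hKa).2 haK
  obtain ⟨M, hJM, hM, hmax⟩ := zorn_subset_nonempty
    {K : Set A | IsRightIdealSet K ∧ (1 : A) ∉ K} hzorn J ⟨hJ, h1⟩
  refine ⟨M, ⟨hM.1, fun hMu => hM.2 (hMu ▸ Set.mem_univ 1), fun K hK hMK hKu => ?_⟩, hJM⟩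
  exact subset_antisymm (hmax ⟨hK, one_notMem_of_ne_univ hK hKu⟩ hMK) hMK

lemma exists_twoSided_inv {n : ℕ} {I : Fin n → Set A}
    (hImax : ∀ t, IsMaxRightIdealSet (I t))
    (hIall : ∀ J : Set A, IsMaxRightIdealSet J → ∃ t, J = I t)
    (hI2 : ∀ t, IsTwoSidedIdealSet (I t)) {a : A} (ha : ∀ t, a ∉ I t) :
    ∃ b : A, a * b = 1 ∧ b * a = 1 := by
  have key : ∀ x : A, (∀ t, x ∉ I t) → ∃ y, x * y = 1 := by
    intro x hx
    by_contra hno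
    push_neg at hno
    have hideal : IsRightIdealSet {z : A | ∃ c, z = x * c} := by
      refine ⟨⟨0, by simp⟩, ?_, ?_, ?_⟩
      · rintro _ ⟨c1, rfl⟩ _ ⟨c2, rfl⟩
        exact ⟨c1 + c2, by rw [mul_add]⟩
      · rintro _ ⟨c, rfl⟩ r
        exact ⟨c * r, by rw [mul_assoc]⟩
      · rintro _ ⟨c, rfl⟩
        exact ⟨-c, by rw [mul_neg]⟩
    have hone : (1 : A) ∉ {z : A | ∃ c, z = x * c} := by
      rintro ⟨c, hc⟩
      exact hno c hc.symm
    obtain ⟨M, hMmax, hsub⟩ := exists_max_rightIdeal hideal hone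
    obtain ⟨t, rfl⟩ := hIall M hMmax
    exact hx t (hsub ⟨1, (mul_one x).symm⟩)
  obtain ⟨b, hb⟩ := key a ha
  have hbI : ∀ t, b ∉ I t := fun t hbt =>
    one_notMem_of_ne_univ (hImax t).1 (hImax t).2.1 (hb ▸ (hI2 t).2 b hbt a)
  obtain ⟨c, hc⟩ := key b hbI
  have hac : a = c := by
    calc a = a * (b * c) := by rw [hc, mul_one]
    _ = (a * b) * c := by rw [mul_assoc]
    _ = c := by rw [hb, one_mul]
  exact ⟨b, hb, by rw [hac, hc]⟩

lemma head_mul_prod_mem {P : Set A} (hP : IsRightIdealSet P) {x : A} (hx : x ∈ P)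
    (l : List A) : (x :: l).prod ∈ P := by
  rw [List.prod_cons]; exact hP.2.2.1 x hx l.prod

lemma exists_mem_of_prod_mem {Q : Set A} (hQ : IsCompletelyPrimeIdealSet Q) :
    ∀ l : List A, l.prod ∈ Q → ∃ z ∈ l, z ∈ Q := by
  intro l
  induction l with
  | nil =>
    intro h
    rw [List.prod_nil] at h
    exact absurd (rightIdeal_eq_univ_of_one_mem hQ.1.1 h) hQ.2.1
  | cons a l ih =>
    intro h
    rw [List.prod_cons] at h
    rcases hQ.2.2 _ _ h with h | h
    · exact ⟨a, List.mem_cons_self, h⟩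
    · obtain ⟨z, hz, hzQ⟩ := ih h
      exact ⟨z, List.mem_cons_of_mem _ hz, hzQ⟩

lemma prod_mem_of_exists_mem {Q : Set A} (hQ : IsTwoSidedIdealSet Q) :
    ∀ l : List A, (∃ z ∈ l, z ∈ Q) → l.prod ∈ Q := by
  intro l
  induction l with
  | nil => rintro ⟨z, hz, _⟩; simp at hz
  | cons a l ih =>
    rintro ⟨z, hz, hzQ⟩
    rw [List.prod_cons]
    rcases List.mem_cons.mp hz with rfl | hz
    · exact hQ.1.2.2.1 z hzQ l.prod
    · exact hQ.2 _ (ih ⟨z, hz, hzQ⟩) a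

lemma cp_comap {B : Type*} [Ring B] (f : A →+* B) {J : Set B}
    (hJ : IsCompletelyPrimeIdealSet J) :
    IsCompletelyPrimeIdealSet {x : A | f x ∈ J} := by
  refine ⟨⟨⟨by simp [Set.mem_setOf_eq, hJ.1.1.1], fun a ha b hb => ?_, fun a ha c => ?_,
    fun a ha => ?_⟩, fun a ha c => ?_⟩, ?_, fun x y h => ?_⟩
  · simpa [Set.mem_setOf_eq, map_add] using hJ.1.1.2.1 _ ha _ hb
  · simpa [Set.mem_setOf_eq, map_mul] using hJ.1.1.2.2.1 _ ha (f c)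
  · simpa [Set.mem_setOf_eq, map_neg] using hJ.1.1.2.2.2 _ ha
  · simpa [Set.mem_setOf_eq, map_mul] using hJ.1.2 _ ha (f c)
  · intro h
    have h1 : (1 : A) ∈ {x : A | f x ∈ J} := h ▸ Set.mem_univ 1
    exact one_notMem_of_ne_univ hJ.1.1 hJ.2.1 (by simpa using h1)
  · have h' : f x * f y ∈ J := by rw [← map_mul]; exact h
    rcases hJ.2.2 _ _ h' with h'' | h''
    · exact Or.inl h''
    · exact Or.inr h''

lemma rightIdeal_avoid : ∀ (k : ℕ) (Q : Fin k → Set A) (P : Set A),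
    (∀ i, IsCompletelyPrimeIdealSet (Q i)) → IsRightIdealSet P →
    (∀ x ∈ P, ∃ i, x ∈ Q i) → ∃ i, P ⊆ Q i := by
  intro k
  induction k with
  | zero =>
    intro Q P hQ hP hsub
    obtain ⟨i, _⟩ := hsub 0 hP.1
    exact i.elim0
  | succ k ih =>
    intro Q P hQ hP hsub
    rcases Nat.eq_zero_or_pos k with rfl | hk
    · refine ⟨0, fun y hy => ?_⟩
      obtain ⟨i, hi⟩ := hsub y hy
      rwa [Fin.eq_zero i] at hi
    by_cases hrem : ∃ i, ∀ x ∈ P, ∃ j, j ≠ i ∧ x ∈ Q j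
    · obtain ⟨i, hi⟩ := hrem
      have hsub' : ∀ x ∈ P, ∃ j', x ∈ Q (i.succAbove j') := by
        intro x hx
        obtain ⟨j, hji, hjQ⟩ := hi x hx
        obtain ⟨j', rfl⟩ := Fin.exists_succAbove_eq hji
        exact ⟨j', hjQ⟩
      obtain ⟨j', hj'⟩ := ih (fun j => Q (i.succAbove j)) P (fun j => hQ _) hP hsub'
      exact ⟨_, hj'⟩
    · exfalso
      push_neg at hrem
      choose x hxP hxQ using hrem
      have hxi : ∀ i, x i ∈ Q i := by
        intro i
        obtain ⟨j, hj⟩ := hsub (x i) (hxP i)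
        by_cases h : j = i
        · exact h ▸ hj
        · exact absurd hj (hxQ i j h)
      obtain ⟨k', rfl⟩ := Nat.exists_eq_succ_of_ne_zero hk.ne'
      set l : List A := List.ofFn (fun j : Fin (k' + 1) => x j.succ) with hl
      have hlP : l.prod ∈ P := by
        rw [hl, List.ofFn_succ]
        exact head_mul_prod_mem hP (hxP _) _
      have hyP : x 0 + l.prod ∈ P := hP.2.1 _ (hxP 0) _ hlP
      obtain ⟨j, hj⟩ := hsub _ hyP
      by_cases hj0 : j = 0
      · subst hj0
        have hprod : l.prod ∈ Q 0 := by
          have h1 : -(x 0) ∈ Q 0 := (hQ 0).1.1.2.2.2 _ (hxi 0)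
          have h2 : x 0 + l.prod + -(x 0) ∈ Q 0 := (hQ 0).1.1.2.1 _ hj _ h1
          have h3 : x 0 + l.prod + -(x 0) = l.prod := by abel
          rwa [h3] at h2
        obtain ⟨z, hz, hzQ⟩ := exists_mem_of_prod_mem (hQ 0) l hprod
        obtain ⟨j', rfl⟩ := List.mem_ofFn.mp hz
        exact hxQ j'.succ 0 (Fin.succ_ne_zero j').symm hzQ
      · obtain ⟨j₀, rfl⟩ := Fin.eq_succ_of_ne_zero hj0
        have hprod : l.prod ∈ Q j₀.succ := by
          refine prod_mem_of_exists_mem (hQ j₀.succ).1 l ⟨x j₀.succ, ?_, hxi j₀.succ⟩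
          exact List.mem_ofFn.mpr ⟨j₀, rfl⟩
        have h1 : -(l.prod) ∈ Q j₀.succ := (hQ j₀.succ).1.1.2.2.2 _ hprod
        have h2 : x 0 + l.prod + -(l.prod) ∈ Q j₀.succ := (hQ j₀.succ).1.1.2.1 _ hj _ h1
        have h3 : x 0 + l.prod + -(l.prod) = x 0 := by abel
        rw [h3] at h2
        exact hxQ 0 j₀.succ (Fin.succ_ne_zero j₀) h2

end Aux

/-- Let `M` be an object of `Morph(Mod-R)`, i.e. `μ : M₀ → M₁` between
right `R`-modules. Suppose `End(M₀)` is a ring of type `n` with maximal right ideals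
`I_1, …, I_n`, and `End(M₁)` is of type `m` with maximal right ideals `K_1, …, K_m`.
Then `E_M` is a ring of type at most `n + m`, and every maximal right ideal of `E_M` is
among the completely prime two-sided ideals `(I_t × End(M₁)) ∩ E_M` and
`(End(M₀) × K_q) ∩ E_M` (identifying `E_M` with its image in `End(M₀) × End(M₁)`). -/
theorem morphEnd_type_le_add (R : Type u) [Ring R] (M₀ M₁ : Type u)
    [AddCommGroup M₀] [AddCommGroup M₁] [Module Rᵐᵒᵖ M₀] [Module Rᵐᵒᵖ M₁]
    (μ : M₀ →ₗ[Rᵐᵒᵖ] M₁) (n m : ℕ)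
    (I : Fin n → Set (Module.End Rᵐᵒᵖ M₀)) (K : Fin m → Set (Module.End Rᵐᵒᵖ M₁))
    (hIinj : Function.Injective I) (hKinj : Function.Injective K)
    (hImax : ∀ t, IsMaxRightIdealSet (I t)) (hKmax : ∀ q, IsMaxRightIdealSet (K q))
    (hIall : ∀ J : Set (Module.End Rᵐᵒᵖ M₀), IsMaxRightIdealSet J → ∃ t, J = I t)
    (hKall : ∀ J : Set (Module.End Rᵐᵒᵖ M₁), IsMaxRightIdealSet J → ∃ q, J = K q)
    (hI2 : ∀ t, IsTwoSidedIdealSet (I t)) (hK2 : ∀ q, IsTwoSidedIdealSet (K q)) :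
    (∃ k ≤ n + m, RingOfType (MorphEnd μ) k) ∧
    (∀ t, IsCompletelyPrimeIdealSet
      {u : MorphEnd μ | (u : Module.End Rᵐᵒᵖ M₀ × Module.End Rᵐᵒᵖ M₁).1 ∈ I t}) ∧
    (∀ q, IsCompletelyPrimeIdealSet
      {u : MorphEnd μ | (u : Module.End Rᵐᵒᵖ M₀ × Module.End Rᵐᵒᵖ M₁).2 ∈ K q}) ∧
    ∀ P : Set (MorphEnd μ), IsMaxRightIdealSet P →
      (∃ t, P = {u : MorphEnd μ |
          (u : Module.End Rᵐᵒᵖ M₀ × Module.End Rᵐᵒᵖ M₁).1 ∈ I t}) ∨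
      (∃ q, P = {u : MorphEnd μ |
          (u : Module.End Rᵐᵒᵖ M₀ × Module.End Rᵐᵒᵖ M₁).2 ∈ K q}) := by
  classical
  have hIcp : ∀ t, IsCompletelyPrimeIdealSet (I t) :=
    fun t => cp_of_max_twoSided (hImax t) (hI2 t)
  have hKcp : ∀ q, IsCompletelyPrimeIdealSet (K q) :=
    fun q => cp_of_max_twoSided (hKmax q) (hK2 q)
  have hQAcp : ∀ t, IsCompletelyPrimeIdealSet
      {u : MorphEnd μ | (u : Module.End Rᵐᵒᵖ M₀ × Module.End Rᵐᵒᵖ M₁).1 ∈ I t} :=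
    fun t => cp_comap ((RingHom.fst _ _).comp (MorphEnd μ).subtype) (hIcp t)
  have hQBcp : ∀ q, IsCompletelyPrimeIdealSet
      {u : MorphEnd μ | (u : Module.End Rᵐᵒᵖ M₀ × Module.End Rᵐᵒᵖ M₁).2 ∈ K q} :=
    fun q => cp_comap ((RingHom.snd _ _).comp (MorphEnd μ).subtype) (hKcp q)
  -- every element of a proper right ideal lies in one of the pullbacks
  have hcover : ∀ P : Set (MorphEnd μ), IsRightIdealSet P → P ≠ Set.univ →
      ∀ u ∈ P, (∃ t, (u : Module.End Rᵐᵒᵖ M₀ × Module.End Rᵐᵒᵖ M₁).1 ∈ I t) ∨ (∃ q, (u : Module.End Rᵐᵒᵖ M₀ × Module.End Rᵐᵒᵖ M₁).2 ∈ K q) := by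
    intro P hP hPne u hu
    by_contra hcon
    push_neg at hcon
    obtain ⟨h1, h2⟩ := hcon
    obtain ⟨a, ha1, ha2⟩ := exists_twoSided_inv hImax hIall hI2 h1
    obtain ⟨b, hb1, hb2⟩ := exists_twoSided_inv hKmax hKall hK2 h2
    have hu2 : ∀ x, (u : Module.End Rᵐᵒᵖ M₀ × Module.End Rᵐᵒᵖ M₁).2 (μ x) = μ ((u : Module.End Rᵐᵒᵖ M₀ × Module.End Rᵐᵒᵖ M₁).1 x) := u.2
    have hab : ∀ x, b (μ x) = μ (a x) := by
      intro x
      have e1 : (u : Module.End Rᵐᵒᵖ M₀ × Module.End Rᵐᵒᵖ M₁).1 (a x) = x := by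
        rw [← Module.End.mul_apply, ha1, Module.End.one_apply]
      calc b (μ x) = b (μ ((u : Module.End Rᵐᵒᵖ M₀ × Module.End Rᵐᵒᵖ M₁).1 (a x))) := by rw [e1]
        _ = b ((u : Module.End Rᵐᵒᵖ M₀ × Module.End Rᵐᵒᵖ M₁).2 (μ (a x))) := by rw [hu2]
        _ = μ (a x) := by rw [← Module.End.mul_apply, hb2, Module.End.one_apply]
    have hv : ((a, b) : Module.End Rᵐᵒᵖ M₀ × Module.End Rᵐᵒᵖ M₁) ∈ MorphEnd μ := hab
    have huv : u * (⟨(a, b), hv⟩ : MorphEnd μ) = 1 := by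
      apply Subtype.ext
      have : ((u * (⟨(a, b), hv⟩ : MorphEnd μ) : MorphEnd μ) : Module.End Rᵐᵒᵖ M₀ × Module.End Rᵐᵒᵖ M₁)
          = (u : Module.End Rᵐᵒᵖ M₀ × Module.End Rᵐᵒᵖ M₁) * (a, b) := rfl
      rw [this]
      have : (u : Module.End Rᵐᵒᵖ M₀ × Module.End Rᵐᵒᵖ M₁) * (a, b) = ((u : Module.End Rᵐᵒᵖ M₀ × Module.End Rᵐᵒᵖ M₁).1 * a, (u : Module.End Rᵐᵒᵖ M₀ × Module.End Rᵐᵒᵖ M₁).2 * b) := rfl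
      rw [this, ha1, hb1]
      rfl
    have h1P : (1 : MorphEnd μ) ∈ P := huv ▸ hP.2.2.1 u hu _
    exact hPne (rightIdeal_eq_univ_of_one_mem hP h1P)
  set QQ : Fin (n + m) → Set (MorphEnd μ) :=
    Fin.append (fun t => {u : MorphEnd μ | (u : Module.End Rᵐᵒᵖ M₀ × Module.End Rᵐᵒᵖ M₁).1 ∈ I t})
      (fun q => {u : MorphEnd μ | (u : Module.End Rᵐᵒᵖ M₀ × Module.End Rᵐᵒᵖ M₁).2 ∈ K q}) with hQQ
  have hQQcp : ∀ i, IsCompletelyPrimeIdealSet (QQ i) := by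
    intro i
    refine Fin.addCases (fun t => ?_) (fun q => ?_) i
    · rw [hQQ, Fin.append_left]; exact hQAcp t
    · rw [hQQ, Fin.append_right]; exact hQBcp q
  have hform : ∀ P : Set (MorphEnd μ), IsMaxRightIdealSet P → ∃ i, P = QQ i := by
    intro P hPmax
    have hsub : ∀ x ∈ P, ∃ i, x ∈ QQ i := by
      intro x hx
      rcases hcover P hPmax.1 hPmax.2.1 x hx with ⟨t, ht⟩ | ⟨q, hq⟩
      · exact ⟨Fin.castAdd m t, by rw [hQQ, Fin.append_left]; exact ht⟩
      · exact ⟨Fin.natAdd n q, by rw [hQQ, Fin.append_right]; exact hq⟩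
    obtain ⟨i, hPi⟩ := rightIdeal_avoid (n + m) QQ P hQQcp hPmax.1 hsub
    exact ⟨i, (hPmax.2.2 (QQ i) (hQQcp i).1.1 hPi (hQQcp i).2.1).symm⟩
  refine ⟨?_, hQAcp, hQBcp, ?_⟩
  · refine ⟨((Finset.univ.image QQ).filter IsMaxRightIdealSet).card, ?_,
      (Finset.univ.image QQ).filter IsMaxRightIdealSet, rfl, ?_, ?_⟩
    · calc ((Finset.univ.image QQ).filter IsMaxRightIdealSet).card
          ≤ (Finset.univ.image QQ).card := Finset.card_filter_le _ _
        _ ≤ Finset.univ.card := Finset.card_image_le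
        _ = n + m := by simp
    · intro J
      constructor
      · intro hJ
        refine Finset.mem_filter.mpr ⟨?_, hJ⟩
        obtain ⟨i, rfl⟩ := hform J hJ
        exact Finset.mem_image.mpr ⟨i, Finset.mem_univ i, rfl⟩
      · intro hJ
        exact (Finset.mem_filter.mp hJ).2
    · intro J hJ
      obtain ⟨i, _, rfl⟩ := Finset.mem_image.mp (Finset.mem_filter.mp hJ).1
      exact (hQQcp i).1
  · intro P hPmax
    obtain ⟨i, hPi⟩ := hform P hPmax
    revert hPi
    refine Fin.addCases (fun t h => ?_) (fun q h => ?_) i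
    · rw [hQQ, Fin.append_left] at h
      exact Or.inl ⟨t, h⟩
    · rw [hQQ, Fin.append_right] at h
      exact Or.inr ⟨q, h⟩
end

section
/- Let M be an object of Morph(Mod-R), E_M its endomorphism ring in Morph(Mod-R), ε : E_M → End(M0) × End(M1) the canonical embedding, π_i : End(M0) × End(M1) → End(M_i) the projections (i = 0, 1), and E_i := π_i(ε(E_M)). Then E_M is a local ring if and only if one of the following three conditions holds: (1) M0 = 0 and End(M1) is a local ring; (2) M1 = 0 and End(M0) is a local ring; (3) M0 ≠ 0, M1 ≠ 0 and, for every endomorphism u = (u0, u1) ∈ E_M: (a) either u0 or 1 − u0 is invertible in E0, and (b) u0 is invertible in E0 if and only if u1 is invertible in E1. -/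
universe u

section ProjImages

variable {A : Type u} [Ring A] {M₀ M₁ : Type u} [AddCommGroup M₀] [AddCommGroup M₁]
  [Module A M₀] [Module A M₁]

/-- `E₀ = π₀(ε(E_M))`, the image of `E_M` under the first projection. -/
def morphE0 (μ : M₀ →ₗ[A] M₁) : Subring (Module.End A M₀) :=
  (MorphEnd μ).map (RingHom.fst (Module.End A M₀) (Module.End A M₁))

/-- `E₁ = π₁(ε(E_M))`, the image of `E_M` under the second projection. -/
def morphE1 (μ : M₀ →ₗ[A] M₁) : Subring (Module.End A M₁) :=
  (MorphEnd μ).map (RingHom.snd (Module.End A M₀) (Module.End A M₁))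

/-- The first component of an element of `E_M`, as an element of `E₀`. -/
def proj0 (μ : M₀ →ₗ[A] M₁) (u : MorphEnd μ) : morphE0 μ :=
  ⟨(u : Module.End A M₀ × Module.End A M₁).1, ⟨u.1, u.2, rfl⟩⟩

/-- The second component of an element of `E_M`, as an element of `E₁`. -/
def proj1 (μ : M₀ →ₗ[A] M₁) (u : MorphEnd μ) : morphE1 μ :=
  ⟨(u : Module.End A M₀ × Module.End A M₁).2, ⟨u.1, u.2, rfl⟩⟩

end ProjImages


section Aux

lemma locAux_isUnit_of_left_right {S : Type*} [Monoid S] {a x y : S}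
    (h1 : x * a = 1) (h2 : a * y = 1) : IsUnit a := by
  have hxy : x = y := by rw [← one_mul y, ← h1, mul_assoc, h2, mul_one]
  exact isUnit_iff_exists.2 ⟨y, h2, hxy ▸ h1⟩

lemma locAux_of_isUnit_or {S : Type*} [Ring S] [Nontrivial S]
    (h : ∀ a : S, IsUnit a ∨ IsUnit (1 - a)) : IsLocalRing S :=
  ⟨fun {a b} hab => by
    rcases h a with ha | ha
    · exact Or.inl ha
    · refine Or.inr ?_
      have : (1 : S) - a = b := by rw [← hab]; abel
      rwa [this] at ha⟩

lemma locAux_isUnit_or {S : Type*} [Ring S] [IsLocalRing S] (a : S) :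
    IsUnit a ∨ IsUnit (1 - a) :=
  IsLocalRing.isUnit_or_isUnit_of_add_one (by abel)

lemma locAux_congr {S T : Type*} [Ring S] [Ring T] (e : S ≃+* T) (h : IsLocalRing S) :
    IsLocalRing T := by
  haveI := h
  haveI : Nontrivial T := e.symm.toEquiv.nontrivial
  refine locAux_of_isUnit_or fun a => ?_
  rcases locAux_isUnit_or (e.symm a) with hu | hu
  · left
    obtain ⟨v, hv1, hv2⟩ := isUnit_iff_exists.1 hu
    refine isUnit_iff_exists.2 ⟨e v, ?_, ?_⟩
    · have h2 := congrArg e hv1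
      rwa [map_mul, e.apply_symm_apply, map_one] at h2
    · have h2 := congrArg e hv2
      rwa [map_mul, e.apply_symm_apply, map_one] at h2
  · right
    have key : e.symm (1 - a) = 1 - e.symm a := by simp
    rw [← key] at hu
    obtain ⟨v, hv1, hv2⟩ := isUnit_iff_exists.1 hu
    refine isUnit_iff_exists.2 ⟨e v, ?_, ?_⟩
    · have h2 := congrArg e hv1
      rwa [map_mul, e.apply_symm_apply, map_one] at h2
    · have h2 := congrArg e hv2
      rwa [map_mul, e.apply_symm_apply, map_one] at h2

variable {A : Type u} [Ring A] {M₀ M₁ : Type u} [AddCommGroup M₀] [AddCommGroup M₁]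
  [Module A M₀] [Module A M₁] (μ : M₀ →ₗ[A] M₁)

lemma proj0_mul (u v : MorphEnd μ) : proj0 μ (u * v) = proj0 μ u * proj0 μ v := rfl
lemma proj0_one : proj0 μ (1 : MorphEnd μ) = 1 := rfl
lemma proj1_mul (u v : MorphEnd μ) : proj1 μ (u * v) = proj1 μ u * proj1 μ v := rfl
lemma proj1_one : proj1 μ (1 : MorphEnd μ) = 1 := rfl

lemma proj0_one_sub (u : MorphEnd μ) : proj0 μ (1 - u) = 1 - proj0 μ u := rfl
lemma proj1_one_sub (u : MorphEnd μ) : proj1 μ (1 - u) = 1 - proj1 μ u := rfl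

lemma locAux_isUnit_proj0 {u : MorphEnd μ} (h : IsUnit u) : IsUnit (proj0 μ u) := by
  obtain ⟨v, hv1, hv2⟩ := isUnit_iff_exists.1 h
  exact isUnit_iff_exists.2 ⟨proj0 μ v,
    by rw [← proj0_mul, hv1, proj0_one], by rw [← proj0_mul, hv2, proj0_one]⟩

lemma locAux_isUnit_proj1 {u : MorphEnd μ} (h : IsUnit u) : IsUnit (proj1 μ u) := by
  obtain ⟨v, hv1, hv2⟩ := isUnit_iff_exists.1 h
  exact isUnit_iff_exists.2 ⟨proj1 μ v,
    by rw [← proj1_mul, hv1, proj1_one], by rw [← proj1_mul, hv2, proj1_one]⟩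

/-- If both projections of `u` are units, then `u` is a unit in `E_M`. -/
lemma locAux_isUnit_of_projs (u : MorphEnd μ) (h0 : IsUnit (proj0 μ u))
    (h1 : IsUnit (proj1 μ u)) : IsUnit u := by
  obtain ⟨c, hc1, hc2⟩ := isUnit_iff_exists.1 h0
  obtain ⟨d, hd1, hd2⟩ := isUnit_iff_exists.1 h1
  obtain ⟨p, hp, hpc⟩ := c.2
  obtain ⟨q, hq, hqd⟩ := d.2
  have hpc' : p.1 = (c : Module.End A M₀) := hpc
  have hqd' : q.2 = (d : Module.End A M₁) := hqd
  have hc1' : (u : Module.End A M₀ × Module.End A M₁).1 * p.1 = 1 := by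
    have h := congrArg Subtype.val hc1
    rw [hpc']; exact h
  have hc2' : p.1 * (u : Module.End A M₀ × Module.End A M₁).1 = 1 := by
    have h := congrArg Subtype.val hc2
    rw [hpc']; exact h
  have hd1' : (u : Module.End A M₀ × Module.End A M₁).2 * q.2 = 1 := by
    have h := congrArg Subtype.val hd1
    rw [hqd']; exact h
  have hd2' : q.2 * (u : Module.End A M₀ × Module.End A M₁).2 = 1 := by
    have h := congrArg Subtype.val hd2
    rw [hqd']; exact h
  have hmem : (p.1, q.2) ∈ MorphEnd μ := by
    intro x
    have hx : (u : Module.End A M₀ × Module.End A M₁).1 (p.1 x) = x := by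
      have h := congrArg (fun f : Module.End A M₀ => f x) hc1'
      simpa [Module.End.mul_apply] using h
    have hu := u.2 (p.1 x)
    calc q.2 (μ x)
        = q.2 ((u : Module.End A M₀ × Module.End A M₁).2 (μ (p.1 x))) := by rw [hu, hx]
      _ = (q.2 * (u : Module.End A M₀ × Module.End A M₁).2) (μ (p.1 x)) := rfl
      _ = μ (p.1 x) := by rw [hd2']; rfl
  set m : MorphEnd μ := ⟨(p.1, q.2), hmem⟩ with hm
  have hum : u * m = 1 := by
    apply Subtype.ext; apply Prod.ext
    · exact hc1'
    · exact hd1'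
  have hmu : m * u = 1 := by
    apply Subtype.ext; apply Prod.ext
    · exact hc2'
    · exact hd2'
  exact ⟨⟨u, m, hum, hmu⟩, rfl⟩

lemma locAux_isUnit_of_fst_eq_one [IsLocalRing (MorphEnd μ)] [Nontrivial M₀]
    {w : MorphEnd μ} (hw : (w : Module.End A M₀ × Module.End A M₁).1 = 1) : IsUnit w := by
  rcases locAux_isUnit_or w with h | h
  · exact h
  · exfalso
    have hu := locAux_isUnit_proj0 μ h
    obtain ⟨e, he1, he2⟩ := isUnit_iff_exists.1 hu
    have h0 : ((proj0 μ (1 - w)) : Module.End A M₀) = 0 := by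
      show ((1 - w : MorphEnd μ) : Module.End A M₀ × Module.End A M₁).1 = 0
      have h1 : ((1 - w : MorphEnd μ) : Module.End A M₀ × Module.End A M₁) =
          1 - (w : Module.End A M₀ × Module.End A M₁) := rfl
      rw [h1, Prod.fst_sub, hw]
      simp
    have h01 : (0 : Module.End A M₀) = 1 := by
      have h := congrArg Subtype.val he1
      rw [show ((proj0 μ (1 - w) * e : morphE0 μ) : Module.End A M₀) =
        ((proj0 μ (1 - w) : morphE0 μ) : Module.End A M₀) * e from rfl, h0, zero_mul] at h
      exact h
    obtain ⟨x, hx⟩ := exists_ne (0 : M₀)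
    apply hx
    have h := congrArg (fun f : Module.End A M₀ => f x) h01
    simpa using h.symm

lemma locAux_isUnit_of_snd_eq_one [IsLocalRing (MorphEnd μ)] [Nontrivial M₁]
    {w : MorphEnd μ} (hw : (w : Module.End A M₀ × Module.End A M₁).2 = 1) : IsUnit w := by
  rcases locAux_isUnit_or w with h | h
  · exact h
  · exfalso
    have hu := locAux_isUnit_proj1 μ h
    obtain ⟨e, he1, he2⟩ := isUnit_iff_exists.1 hu
    have h0 : ((proj1 μ (1 - w)) : Module.End A M₁) = 0 := by
      show ((1 - w : MorphEnd μ) : Module.End A M₀ × Module.End A M₁).2 = 0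
      have h1 : ((1 - w : MorphEnd μ) : Module.End A M₀ × Module.End A M₁) =
          1 - (w : Module.End A M₀ × Module.End A M₁) := rfl
      rw [h1, Prod.snd_sub, hw]
      simp
    have h01 : (0 : Module.End A M₁) = 1 := by
      have h := congrArg Subtype.val he1
      rw [show ((proj1 μ (1 - w) * e : morphE1 μ) : Module.End A M₁) =
        ((proj1 μ (1 - w) : morphE1 μ) : Module.End A M₁) * e from rfl, h0, zero_mul] at h
      exact h
    obtain ⟨x, hx⟩ := exists_ne (0 : M₁)
    apply hx
    have h := congrArg (fun f : Module.End A M₁ => f x) h01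
    simpa using h.symm

lemma locAux_proj1_of_proj0 [IsLocalRing (MorphEnd μ)] [Nontrivial M₀]
    {u : MorphEnd μ} (h0 : IsUnit (proj0 μ u)) : IsUnit (proj1 μ u) := by
  obtain ⟨c, hc1, hc2⟩ := isUnit_iff_exists.1 h0
  obtain ⟨p, hp, hpc⟩ := c.2
  have hpc' : p.1 = (c : Module.End A M₀) := hpc
  set v : MorphEnd μ := ⟨p, hp⟩ with hv
  have huv1 : ((u * v : MorphEnd μ) : Module.End A M₀ × Module.End A M₁).1 = 1 := by
    have h := congrArg Subtype.val hc1
    show (u : Module.End A M₀ × Module.End A M₁).1 * p.1 = 1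
    rw [hpc']; exact h
  have hvu1 : ((v * u : MorphEnd μ) : Module.End A M₀ × Module.End A M₁).1 = 1 := by
    have h := congrArg Subtype.val hc2
    show p.1 * (u : Module.End A M₀ × Module.End A M₁).1 = 1
    rw [hpc']; exact h
  have hw := locAux_isUnit_proj1 μ (locAux_isUnit_of_fst_eq_one μ huv1)
  have hw' := locAux_isUnit_proj1 μ (locAux_isUnit_of_fst_eq_one μ hvu1)
  rw [proj1_mul] at hw hw'
  obtain ⟨r, hr1, hr2⟩ := isUnit_iff_exists.1 hw
  obtain ⟨l, hl1, hl2⟩ := isUnit_iff_exists.1 hw'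
  refine locAux_isUnit_of_left_right (x := l * proj1 μ v) (y := proj1 μ v * r) ?_ ?_
  · rw [mul_assoc]; exact hl2
  · rw [← mul_assoc]; exact hr1

lemma locAux_proj0_of_proj1 [IsLocalRing (MorphEnd μ)] [Nontrivial M₁]
    {u : MorphEnd μ} (h1 : IsUnit (proj1 μ u)) : IsUnit (proj0 μ u) := by
  obtain ⟨d, hd1, hd2⟩ := isUnit_iff_exists.1 h1
  obtain ⟨q, hq, hqd⟩ := d.2
  have hqd' : q.2 = (d : Module.End A M₁) := hqd
  set v : MorphEnd μ := ⟨q, hq⟩ with hv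
  have huv1 : ((u * v : MorphEnd μ) : Module.End A M₀ × Module.End A M₁).2 = 1 := by
    have h := congrArg Subtype.val hd1
    show (u : Module.End A M₀ × Module.End A M₁).2 * q.2 = 1
    rw [hqd']; exact h
  have hvu1 : ((v * u : MorphEnd μ) : Module.End A M₀ × Module.End A M₁).2 = 1 := by
    have h := congrArg Subtype.val hd2
    show q.2 * (u : Module.End A M₀ × Module.End A M₁).2 = 1
    rw [hqd']; exact h
  have hw := locAux_isUnit_proj0 μ (locAux_isUnit_of_snd_eq_one μ huv1)
  have hw' := locAux_isUnit_proj0 μ (locAux_isUnit_of_snd_eq_one μ hvu1)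
  rw [proj0_mul] at hw hw'
  obtain ⟨r, hr1, hr2⟩ := isUnit_iff_exists.1 hw
  obtain ⟨l, hl1, hl2⟩ := isUnit_iff_exists.1 hw'
  refine locAux_isUnit_of_left_right (x := l * proj0 μ v) (y := proj0 μ v * r) ?_ ?_
  · rw [mul_assoc]; exact hl2
  · rw [← mul_assoc]; exact hr1

/-- When `M₀` is trivial, `E_M ≅ End(M₁)`. -/
def morphEndEquivSnd [Subsingleton M₀] : MorphEnd μ ≃+* Module.End A M₁ where
  toFun u := (u : Module.End A M₀ × Module.End A M₁).2
  invFun f := ⟨(1, f), fun x => by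
    have hx : x = 0 := Subsingleton.elim _ _
    simp [hx]⟩
  left_inv u := by
    apply Subtype.ext; apply Prod.ext
    · exact LinearMap.ext fun x => Subsingleton.elim _ _
    · rfl
  right_inv f := rfl
  map_mul' _ _ := rfl
  map_add' _ _ := rfl

/-- When `M₁` is trivial, `E_M ≅ End(M₀)`. -/
def morphEndEquivFst [Subsingleton M₁] : MorphEnd μ ≃+* Module.End A M₀ where
  toFun u := (u : Module.End A M₀ × Module.End A M₁).1
  invFun f := ⟨(f, 1), fun x => Subsingleton.elim _ _⟩
  left_inv u := by
    apply Subtype.ext; apply Prod.ext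
    · rfl
    · exact LinearMap.ext fun x => Subsingleton.elim _ _
  right_inv f := rfl
  map_mul' _ _ := rfl
  map_add' _ _ := rfl

end Aux

/-- Let `M` be an object of `Morph(Mod-R)`, `E_M` its endomorphism
ring, and `E_i` the image of `E_M` in `End(M_i)` under the canonical projection. Then
`E_M` is a local ring if and only if one of the following holds: (1) `M₀ = 0` and
`End(M₁)` is local; (2) `M₁ = 0` and `End(M₀)` is local; (3) `M₀ ≠ 0`, `M₁ ≠ 0` and for
every `u = (u₀, u₁) ∈ E_M`: (a) either `u₀` or `1 - u₀` is invertible in `E₀`, and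
(b) `u₀` is invertible in `E₀` iff `u₁` is invertible in `E₁`. -/
theorem morphEnd_local_iff (R : Type u) [Ring R] (M₀ M₁ : Type u)
    [AddCommGroup M₀] [AddCommGroup M₁] [Module Rᵐᵒᵖ M₀] [Module Rᵐᵒᵖ M₁]
    (μ : M₀ →ₗ[Rᵐᵒᵖ] M₁) :
    IsLocalRing (MorphEnd μ) ↔
      (Subsingleton M₀ ∧ IsLocalRing (Module.End Rᵐᵒᵖ M₁)) ∨
      (Subsingleton M₁ ∧ IsLocalRing (Module.End Rᵐᵒᵖ M₀)) ∨
      (Nontrivial M₀ ∧ Nontrivial M₁ ∧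
        ∀ u : MorphEnd μ,
          (IsUnit (proj0 μ u) ∨ IsUnit (1 - proj0 μ u)) ∧
          (IsUnit (proj0 μ u) ↔ IsUnit (proj1 μ u))) := by
  constructor
  · intro h
    rcases subsingleton_or_nontrivial M₀ with h0 | h0
    · exact Or.inl ⟨h0, locAux_congr (morphEndEquivSnd μ) h⟩
    rcases subsingleton_or_nontrivial M₁ with h1 | h1
    · exact Or.inr (Or.inl ⟨h1, locAux_congr (morphEndEquivFst μ) h⟩)
    · refine Or.inr (Or.inr ⟨h0, h1, fun u => ⟨?_, ?_, ?_⟩⟩)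
      · rcases locAux_isUnit_or u with hu | hu
        · exact Or.inl (locAux_isUnit_proj0 μ hu)
        · refine Or.inr ?_
          have h2 := locAux_isUnit_proj0 μ hu
          rw [proj0_one_sub] at h2
          exact h2
      · exact fun hu => locAux_proj1_of_proj0 μ hu
      · exact fun hu => locAux_proj0_of_proj1 μ hu
  · rintro (⟨h0, hloc⟩ | ⟨h1, hloc⟩ | ⟨h0, h1, hcond⟩)
    · exact locAux_congr (morphEndEquivSnd μ).symm hloc
    · exact locAux_congr (morphEndEquivFst μ).symm hloc
    · haveI : Nontrivial (MorphEnd μ) := by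
        obtain ⟨m, hm⟩ := exists_ne (0 : M₀)
        refine ⟨0, 1, fun h => hm ?_⟩
        have h2 := congrArg (fun w : MorphEnd μ =>
          ((w : Module.End Rᵐᵒᵖ M₀ × Module.End Rᵐᵒᵖ M₁)).1 m) h
        simpa using h2.symm
      refine locAux_of_isUnit_or fun u => ?_
      rcases (hcond u).1 with hu | hu
      · exact Or.inl (locAux_isUnit_of_projs μ u hu ((hcond u).2.mp hu))
      · refine Or.inr ?_
        rw [← proj0_one_sub] at hu
        exact locAux_isUnit_of_projs μ (1 - u) hu ((hcond (1 - u)).2.mp hu)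
end

section
/- Let M be an object of Morph(Mod-R), E_M its endomorphism ring in Morph(Mod-R), ε : E_M → End(M0) × End(M1) the canonical embedding, π_i : End(M0) × End(M1) → End(M_i) the projections (i = 0, 1), and E_i := π_i(ε(E_M)). Then the ring E_M is semilocal if and only if both rings E_0 and E_1 are semilocal. -/
set_option maxHeartbeats 1000000
set_option synthInstance.maxHeartbeats 400000


universe u

section SemilocalAux

variable {S T : Type*} [Ring S] [Ring T]

/-- Lift a ring homomorphism to the quotient by a ring congruence. -/
def ringConLift (c : RingCon S) (f : S →+* T) (h : ∀ x y, c x y → f x = f y) :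
    c.Quotient →+* T where
  toFun := Quotient.lift f (fun a b hab => h a b hab)
  map_one' := map_one f
  map_zero' := map_zero f
  map_add' := fun a b => Quotient.inductionOn₂ a b fun x y => map_add f x y
  map_mul' := fun a b => Quotient.inductionOn₂ a b fun x y => map_mul f x y

lemma ringConLift_mk (c : RingCon S) (f : S →+* T) (h) (x : S) :
    ringConLift c f h (x : c.Quotient) = f x := rfl

lemma ringConQuot_surjective (c : RingCon S) :
    Function.Surjective (fun x : S => (x : c.Quotient)) :=
  fun q => Quotient.inductionOn q fun x => ⟨x, rfl⟩

lemma ringConQuot_mk_eq_zero_iff (I : TwoSidedIdeal S) (x : S) :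
    (x : I.ringCon.Quotient) = 0 ↔ x ∈ I := by
  have h0 : (0 : I.ringCon.Quotient) = ((0 : S) : I.ringCon.Quotient) := rfl
  rw [h0, RingCon.eq, TwoSidedIdeal.rel_iff, sub_zero]

lemma mem_jacobsonBot_iff {x : S} :
    x ∈ (⊥ : TwoSidedIdeal S).jacobson ↔ ∀ y, ∃ z, z * (y * x + 1) = 1 := by
  rw [TwoSidedIdeal.mem_jacobson_iff]
  refine forall_congr' fun y => exists_congr fun z => ?_
  have h : z * y * x + z = z * (y * x + 1) := by noncomm_ring
  rw [TwoSidedIdeal.mem_bot, sub_eq_zero, h]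

lemma jac_map (f : S →+* T) (hf : Function.Surjective f) {x : S}
    (hx : x ∈ (⊥ : TwoSidedIdeal S).jacobson) :
    f x ∈ (⊥ : TwoSidedIdeal T).jacobson := by
  rw [mem_jacobsonBot_iff] at hx ⊢
  intro y
  obtain ⟨y', rfl⟩ := hf y
  obtain ⟨z, hz⟩ := hx y'
  refine ⟨f z, ?_⟩
  have h : f (z * (y' * x + 1)) = 1 := by rw [hz, map_one]
  simpa [map_mul, map_add, map_one] using h

lemma isUnit_add_one_of_mem_jacobson {x : S} (hx : x ∈ (⊥ : TwoSidedIdeal S).jacobson) :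
    IsUnit (x + 1) := by
  obtain ⟨z, hz⟩ := mem_jacobsonBot_iff.mp hx 1
  rw [one_mul] at hz
  have hmem : -(z * x) ∈ (⊥ : TwoSidedIdeal S).jacobson :=
    TwoSidedIdeal.neg_mem _ (TwoSidedIdeal.mul_mem_left _ z x hx)
  obtain ⟨t, ht⟩ := mem_jacobsonBot_iff.mp hmem 1
  rw [one_mul] at ht
  have h1 : z * x + z = 1 := by rw [← hz]; noncomm_ring
  have hz' : -(z * x) + 1 = z := by rw [← h1]; abel
  rw [hz'] at ht
  have h2 : t = x + 1 := by
    have h3 := congrArg (fun s => t * s) hz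
    simp only [mul_one] at h3
    rw [← mul_assoc, ht, one_mul] at h3
    exact h3.symm
  exact ⟨⟨x + 1, z, h2 ▸ ht, hz⟩, rfl⟩

/-- The induced map on quotients modulo the Jacobson radical. -/
def jacQuotMap (f : S →+* T) (hf : Function.Surjective f) :
    ((⊥ : TwoSidedIdeal S).jacobson.ringCon).Quotient →+*
      ((⊥ : TwoSidedIdeal T).jacobson.ringCon).Quotient :=
  ringConLift _ ((RingCon.mk' _).comp f) (fun x y hxy => by
    have hxy' : x - y ∈ (⊥ : TwoSidedIdeal S).jacobson :=
      (TwoSidedIdeal.rel_iff _ _ _).mp hxy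
    have h : f x - f y ∈ (⊥ : TwoSidedIdeal T).jacobson := by
      rw [← map_sub]; exact jac_map f hf hxy'
    exact (RingCon.eq _).mpr ((TwoSidedIdeal.rel_iff _ _ _).mpr h))

lemma jacQuotMap_mk (f : S →+* T) (hf : Function.Surjective f) (x : S) :
    jacQuotMap f hf (x : ((⊥ : TwoSidedIdeal S).jacobson.ringCon).Quotient) =
      (f x : ((⊥ : TwoSidedIdeal T).jacobson.ringCon).Quotient) := rfl

lemma jacQuotMap_surjective (f : S →+* T) (hf : Function.Surjective f) :
    Function.Surjective (jacQuotMap f hf) := by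
  intro q
  obtain ⟨y, rfl⟩ := ringConQuot_surjective _ q
  obtain ⟨x, rfl⟩ := hf y
  exact ⟨(x : ((⊥ : TwoSidedIdeal S).jacobson.ringCon).Quotient), rfl⟩

end SemilocalAux

section MorphAuxHoms

variable {A : Type u} [Ring A] {M₀ M₁ : Type u} [AddCommGroup M₀] [AddCommGroup M₁]
  [Module A M₀] [Module A M₁] (μ : M₀ →ₗ[A] M₁)

/-- `proj0` as a ring homomorphism. -/
def proj0Hom : MorphEnd μ →+* morphE0 μ where
  toFun := proj0 μ
  map_one' := rfl
  map_mul' _ _ := rfl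
  map_zero' := rfl
  map_add' _ _ := rfl

/-- `proj1` as a ring homomorphism. -/
def proj1Hom : MorphEnd μ →+* morphE1 μ where
  toFun := proj1 μ
  map_one' := rfl
  map_mul' _ _ := rfl
  map_zero' := rfl
  map_add' _ _ := rfl

lemma proj0Hom_surjective : Function.Surjective (proj0Hom μ) := by
  rintro ⟨y, hy⟩
  obtain ⟨x, hx, rfl⟩ := hy
  exact ⟨⟨x, hx⟩, rfl⟩

lemma proj1Hom_surjective : Function.Surjective (proj1Hom μ) := by
  rintro ⟨y, hy⟩
  obtain ⟨x, hx, rfl⟩ := hy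
  exact ⟨⟨x, hx⟩, rfl⟩

lemma morph_mul_eq_zero (s t : MorphEnd μ) (hs : proj0Hom μ s = 0) (ht : proj1Hom μ t = 0) :
    s * t = 0 := by
  have hs' : (s : Module.End A M₀ × Module.End A M₁).1 = 0 := congrArg Subtype.val hs
  have ht' : (t : Module.End A M₀ × Module.End A M₁).2 = 0 := congrArg Subtype.val ht
  apply Subtype.ext
  rw [Subring.coe_mul, Subring.coe_zero]
  refine Prod.ext ?_ ?_
  · rw [Prod.fst_mul, Prod.fst_zero, hs', zero_mul]
  · rw [Prod.snd_mul, Prod.snd_zero, ht', mul_zero]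

lemma morph_joint_zero (x : MorphEnd μ) (h0 : proj0Hom μ x = 0) (h1 : proj1Hom μ x = 0) :
    x = 0 := by
  have h0' : (x : Module.End A M₀ × Module.End A M₁).1 = 0 := congrArg Subtype.val h0
  have h1' : (x : Module.End A M₀ × Module.End A M₁).2 = 0 := congrArg Subtype.val h1
  apply Subtype.ext
  rw [Subring.coe_zero]
  exact Prod.ext (by rw [Prod.fst_zero]; exact h0') (by rw [Prod.snd_zero]; exact h1')

lemma morph_isUnit_add_one (z : MorphEnd μ)
    (h0 : proj0Hom μ z ∈ (⊥ : TwoSidedIdeal (morphE0 μ)).jacobson)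
    (h1 : proj1Hom μ z ∈ (⊥ : TwoSidedIdeal (morphE1 μ)).jacobson) :
    IsUnit (z + 1) := by
  obtain ⟨u₀, hu₀⟩ := isUnit_add_one_of_mem_jacobson h0
  obtain ⟨u₁, hu₁⟩ := isUnit_add_one_of_mem_jacobson h1
  obtain ⟨a, ha⟩ := proj0Hom_surjective μ (↑u₀⁻¹)
  obtain ⟨b, hb⟩ := proj1Hom_surjective μ (↑u₁⁻¹)
  set w : MorphEnd μ := z + 1 with hw
  have hpw0 : proj0Hom μ w = ↑u₀ := by rw [hw, map_add, map_one, hu₀]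
  have hpw1 : proj1Hom μ w = ↑u₁ := by rw [hw, map_add, map_one, hu₁]
  have ha1 : proj0Hom μ (a * w) = 1 := by rw [map_mul, ha, hpw0, Units.inv_mul]
  have ha2 : proj0Hom μ (w * a) = 1 := by rw [map_mul, ha, hpw0, Units.mul_inv]
  have hb1 : proj1Hom μ (b * w) = 1 := by rw [map_mul, hb, hpw1, Units.inv_mul]
  have hb2 : proj1Hom μ (w * b) = 1 := by rw [map_mul, hb, hpw1, Units.mul_inv]
  have hA1 : proj0Hom μ (a * w - 1) = 0 := by rw [map_sub, ha1, map_one, sub_self]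
  have hA2 : proj0Hom μ (w * a - 1) = 0 := by rw [map_sub, ha2, map_one, sub_self]
  have hB1 : proj1Hom μ (b * w - 1) = 0 := by rw [map_sub, hb1, map_one, sub_self]
  have hB2 : proj1Hom μ (w * b - 1) = 0 := by rw [map_sub, hb2, map_one, sub_self]
  have k1 : (a * w - 1) * (b * w - 1) = 0 := morph_mul_eq_zero μ _ _ hA1 hB1
  have k2 : (w * a - 1) * (w * b - 1) = 0 := morph_mul_eq_zero μ _ _ hA2 hB2
  refine ⟨⟨w, a + b - a * w * b, ?_, ?_⟩, rfl⟩
  · have : w * (a + b - a * w * b) = 1 - (w * a - 1) * (w * b - 1) := by noncomm_ring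
    rw [this, k2, sub_zero]
  · have : (a + b - a * w * b) * w = 1 - (a * w - 1) * (b * w - 1) := by noncomm_ring
    rw [this, k1, sub_zero]

lemma morph_mem_jac_iff (x : MorphEnd μ) :
    x ∈ (⊥ : TwoSidedIdeal (MorphEnd μ)).jacobson ↔
      proj0Hom μ x ∈ (⊥ : TwoSidedIdeal (morphE0 μ)).jacobson ∧
      proj1Hom μ x ∈ (⊥ : TwoSidedIdeal (morphE1 μ)).jacobson := by
  constructor
  · intro h
    exact ⟨jac_map _ (proj0Hom_surjective μ) h, jac_map _ (proj1Hom_surjective μ) h⟩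
  · rintro ⟨h0, h1⟩
    rw [mem_jacobsonBot_iff]
    intro y
    have h0' : proj0Hom μ (y * x) ∈ (⊥ : TwoSidedIdeal (morphE0 μ)).jacobson := by
      rw [map_mul]; exact TwoSidedIdeal.mul_mem_left _ _ _ h0
    have h1' : proj1Hom μ (y * x) ∈ (⊥ : TwoSidedIdeal (morphE1 μ)).jacobson := by
      rw [map_mul]; exact TwoSidedIdeal.mul_mem_left _ _ _ h1
    obtain ⟨u, hu⟩ := morph_isUnit_add_one μ (y * x) h0' h1'
    exact ⟨↑u⁻¹, by rw [← hu, Units.inv_mul]⟩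

end MorphAuxHoms

/-- Let `M` be an object of `Morph(Mod-R)`, `E_M` its endomorphism
ring, and `E_i := π_i(ε(E_M))` the images of `E_M` in `End(M₀)` and `End(M₁)` under the
canonical projections. Then `E_M` is semilocal if and only if both `E₀` and `E₁` are
semilocal. -/
theorem morphEnd_semilocal_iff (R : Type u) [Ring R] (M₀ M₁ : Type u)
    [AddCommGroup M₀] [AddCommGroup M₁] [Module Rᵐᵒᵖ M₀] [Module Rᵐᵒᵖ M₁]
    (μ : M₀ →ₗ[Rᵐᵒᵖ] M₁) :
    IsSemilocalRing (MorphEnd μ) ↔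
      IsSemilocalRing (morphE0 μ) ∧ IsSemilocalRing (morphE1 μ) := by
  constructor
  · intro h
    haveI hE : IsSemisimpleRing (((⊥ : TwoSidedIdeal (MorphEnd μ)).jacobson.ringCon).Quotient) := h
    exact ⟨(jacQuotMap (proj0Hom μ) (proj0Hom_surjective μ)).isSemisimpleRing_of_surjective
        (jacQuotMap_surjective _ _),
      (jacQuotMap (proj1Hom μ) (proj1Hom_surjective μ)).isSemisimpleRing_of_surjective
        (jacQuotMap_surjective _ _)⟩
  · rintro ⟨h0, h1⟩
    haveI hs0 : IsSemisimpleRing (((⊥ : TwoSidedIdeal (morphE0 μ)).jacobson.ringCon).Quotient) := h0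
    haveI hs1 : IsSemisimpleRing (((⊥ : TwoSidedIdeal (morphE1 μ)).jacobson.ringCon).Quotient) := h1
    let Aq := ((⊥ : TwoSidedIdeal (MorphEnd μ)).jacobson.ringCon).Quotient
    let B₀ := ((⊥ : TwoSidedIdeal (morphE0 μ)).jacobson.ringCon).Quotient
    let B₁ := ((⊥ : TwoSidedIdeal (morphE1 μ)).jacobson.ringCon).Quotient
    let φ₀ : Aq →+* B₀ := jacQuotMap (proj0Hom μ) (proj0Hom_surjective μ)
    let φ₁ : Aq →+* B₁ := jacQuotMap (proj1Hom μ) (proj1Hom_surjective μ)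
    letI : Module Aq B₀ := Module.compHom _ φ₀
    letI : Module Aq B₁ := Module.compHom _ φ₁
    haveI : RingHomSurjective φ₀ := ⟨jacQuotMap_surjective _ _⟩
    haveI : RingHomSurjective φ₁ := ⟨jacQuotMap_surjective _ _⟩
    let e₀ : B₀ →ₛₗ[φ₀] B₀ := { AddMonoidHom.id B₀ with map_smul' := fun _ _ => rfl }
    let e₁ : B₁ →ₛₗ[φ₁] B₁ := { AddMonoidHom.id B₁ with map_smul' := fun _ _ => rfl }
    haveI hB₀ : IsSemisimpleModule Aq B₀ :=
      (e₀.isSemisimpleModule_iff_of_bijective Function.bijective_id).mpr hs0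
    haveI hB₁ : IsSemisimpleModule Aq B₁ :=
      (e₁.isSemisimpleModule_iff_of_bijective Function.bijective_id).mpr hs1
    haveI hprod : IsSemisimpleModule Aq (B₀ × B₁) := by
      have h := IsSemisimpleModule.sup
        (IsSemisimpleModule.range (LinearMap.inl Aq B₀ B₁))
        (IsSemisimpleModule.range (LinearMap.inr Aq B₀ B₁))
      rw [LinearMap.sup_range_inl_inr] at h
      haveI := h
      exact IsSemisimpleModule.congr (Submodule.topEquiv.symm)
    let ψ : Aq →ₗ[Aq] B₀ × B₁ :=
      { toFun := fun a => (φ₀ a, φ₁ a)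
        map_add' := fun a b => by simp [Prod.ext_iff]
        map_smul' := fun a b => by
          refine Prod.ext ?_ ?_
          · show φ₀ (a * b) = φ₀ a * φ₀ b
            exact map_mul φ₀ a b
          · show φ₁ (a * b) = φ₁ a * φ₁ b
            exact map_mul φ₁ a b }
    have hinj : Function.Injective ψ := by
      rw [injective_iff_map_eq_zero]
      intro q hq
      obtain ⟨x, rfl⟩ := ringConQuot_surjective _ q
      have hq0 : φ₀ ((x : Aq)) = 0 := congrArg Prod.fst hq
      have hq1 : φ₁ ((x : Aq)) = 0 := congrArg Prod.snd hq
      have hj0 : proj0Hom μ x ∈ (⊥ : TwoSidedIdeal (morphE0 μ)).jacobson :=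
        (ringConQuot_mk_eq_zero_iff _ _).mp hq0
      have hj1 : proj1Hom μ x ∈ (⊥ : TwoSidedIdeal (morphE1 μ)).jacobson :=
        (ringConQuot_mk_eq_zero_iff _ _).mp hq1
      exact (ringConQuot_mk_eq_zero_iff _ _).mpr ((morph_mem_jac_iff μ x).mpr ⟨hj0, hj1⟩)
    exact IsSemisimpleModule.congr (LinearEquiv.ofInjective ψ hinj)
end

section
/- Let M be an object of Morph(Mod-R) such that both End(M0) and End(M1) are local rings. Then the endomorphism ring E_M of M in Morph(Mod-R) is a local ring if and only if one of the following two conditions holds: (1) for every endomorphism (u0, u1) ∈ E_M, if u0 is an automorphism of M0, then u1 is an automorphism of M1; or (2) for every endomorphism (u0, u1) ∈ E_M, if u1 is an automorphism of M1, then u0 is an automorphism of M0. -/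
universe u

section Aux
variable {S : Type*} [Ring S]

lemma myIsUnit_or_of_isUnit_add [IsLocalRing S] {a b : S} (h : IsUnit (a + b)) :
    IsUnit a ∨ IsUnit b := by
  obtain ⟨u, hu⟩ := h
  have h1 : a * ↑u⁻¹ + b * ↑u⁻¹ = 1 := by
    rw [← add_mul, ← hu]; exact u.mul_inv
  rcases IsLocalRing.isUnit_or_isUnit_of_add_one h1 with h' | h'
  · left; simpa [mul_assoc] using h'.mul u.isUnit
  · right; simpa [mul_assoc] using h'.mul u.isUnit

lemma myIsUnit_or_one_sub [IsLocalRing S] (a : S) : IsUnit a ∨ IsUnit (1 - a) :=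
  IsLocalRing.isUnit_or_isUnit_of_add_one (by abel)

lemma myOfIsUnit [Nontrivial S] (h : ∀ a : S, IsUnit a ∨ IsUnit (1 - a)) : IsLocalRing S :=
  ⟨fun {a b} hab => by
    have := h a
    rwa [show (1 : S) - a = b by rw [← hab]; abel] at this⟩

end Aux


/-- Let `M` be an object of `Morph(Mod-R)` (a morphism `μ : M₀ → M₁`
of right `R`-modules) such that both `End(M₀)` and `End(M₁)` are local rings. Then the
endomorphism ring `E_M` is local if and only if (1) for every `(u₀, u₁) ∈ E_M`, if `u₀`
is an automorphism of `M₀` then `u₁` is an automorphism of `M₁`, or (2) for every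
`(u₀, u₁) ∈ E_M`, if `u₁` is an automorphism of `M₁` then `u₀` is an automorphism of
`M₀`. -/

theorem morphEnd_local_iff_of_local_ends (R : Type u) [Ring R] (M₀ M₁ : Type u)
    [AddCommGroup M₀] [AddCommGroup M₁] [Module Rᵐᵒᵖ M₀] [Module Rᵐᵒᵖ M₁]
    (μ : M₀ →ₗ[Rᵐᵒᵖ] M₁)
    (h₀ : IsLocalRing (Module.End Rᵐᵒᵖ M₀)) (h₁ : IsLocalRing (Module.End Rᵐᵒᵖ M₁)) :
    IsLocalRing (MorphEnd μ) ↔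
      ((∀ u : MorphEnd μ,
          Function.Bijective (u : Module.End Rᵐᵒᵖ M₀ × Module.End Rᵐᵒᵖ M₁).1 →
          Function.Bijective (u : Module.End Rᵐᵒᵖ M₀ × Module.End Rᵐᵒᵖ M₁).2) ∨
       (∀ u : MorphEnd μ,
          Function.Bijective (u : Module.End Rᵐᵒᵖ M₀ × Module.End Rᵐᵒᵖ M₁).2 →
          Function.Bijective (u : Module.End Rᵐᵒᵖ M₀ × Module.End Rᵐᵒᵖ M₁).1)) := by
  classical
  have key : ∀ u : MorphEnd μ, IsUnit u ↔
      Function.Bijective (u : Module.End Rᵐᵒᵖ M₀ × Module.End Rᵐᵒᵖ M₁).1 ∧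
      Function.Bijective (u : Module.End Rᵐᵒᵖ M₀ × Module.End Rᵐᵒᵖ M₁).2 := by
    intro u
    constructor
    · intro h
      have h' := h.map (MorphEnd μ).subtype
      exact ⟨(Module.End.isUnit_iff _).mp (h'.map (RingHom.fst _ _)),
        (Module.End.isUnit_iff _).mp (h'.map (RingHom.snd _ _))⟩
    · rintro ⟨hb0, hb1⟩
      obtain ⟨a, ha⟩ := (Module.End.isUnit_iff _).mpr hb0
      obtain ⟨b, hb⟩ := (Module.End.isUnit_iff _).mpr hb1
      have ha1 : (u : Module.End Rᵐᵒᵖ M₀ × Module.End Rᵐᵒᵖ M₁).1 * ↑a⁻¹ = 1 := by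
        rw [← ha]; exact a.mul_inv
      have ha2 : (↑a⁻¹ : Module.End Rᵐᵒᵖ M₀) * (u : Module.End Rᵐᵒᵖ M₀ × Module.End Rᵐᵒᵖ M₁).1
          = 1 := by rw [← ha]; exact a.inv_mul
      have hb1' : (u : Module.End Rᵐᵒᵖ M₀ × Module.End Rᵐᵒᵖ M₁).2 * ↑b⁻¹ = 1 := by
        rw [← hb]; exact b.mul_inv
      have hb2' : (↑b⁻¹ : Module.End Rᵐᵒᵖ M₁) * (u : Module.End Rᵐᵒᵖ M₀ × Module.End Rᵐᵒᵖ M₁).2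
          = 1 := by rw [← hb]; exact b.inv_mul
      have hu2 : ∀ x, (u : Module.End Rᵐᵒᵖ M₀ × Module.End Rᵐᵒᵖ M₁).2 (μ x) =
          μ ((u : Module.End Rᵐᵒᵖ M₀ × Module.End Rᵐᵒᵖ M₁).1 x) := u.2
      have hmem : ((↑a⁻¹ : Module.End Rᵐᵒᵖ M₀), (↑b⁻¹ : Module.End Rᵐᵒᵖ M₁)) ∈ MorphEnd μ := by
        intro x
        have e1 : (u : Module.End Rᵐᵒᵖ M₀ × Module.End Rᵐᵒᵖ M₁).1 ((↑a⁻¹ : Module.End Rᵐᵒᵖ M₀) x)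
            = x := by
          have := DFunLike.congr_fun ha1 x
          simpa [Module.End.mul_apply] using this
        show (↑b⁻¹ : Module.End Rᵐᵒᵖ M₁) (μ x) = μ ((↑a⁻¹ : Module.End Rᵐᵒᵖ M₀) x)
        calc (↑b⁻¹ : Module.End Rᵐᵒᵖ M₁) (μ x)
            = (↑b⁻¹ : Module.End Rᵐᵒᵖ M₁) ((u : Module.End Rᵐᵒᵖ M₀ × Module.End Rᵐᵒᵖ M₁).2
                (μ ((↑a⁻¹ : Module.End Rᵐᵒᵖ M₀) x))) := by
              rw [hu2, e1]
          _ = μ ((↑a⁻¹ : Module.End Rᵐᵒᵖ M₀) x) := by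
              have := DFunLike.congr_fun hb2' (μ ((↑a⁻¹ : Module.End Rᵐᵒᵖ M₀) x))
              simpa [Module.End.mul_apply] using this
      refine ⟨⟨u, ⟨_, hmem⟩, ?_, ?_⟩, rfl⟩
      · exact Subtype.ext (Prod.ext ha1 hb1')
      · exact Subtype.ext (Prod.ext ha2 hb2')
  have hnontriv : Nontrivial (MorphEnd μ) := by
    refine ⟨0, 1, fun h => ?_⟩
    have := congrArg (fun x : MorphEnd μ => (x : Module.End Rᵐᵒᵖ M₀ × Module.End Rᵐᵒᵖ M₁).1) h
    exact zero_ne_one (α := Module.End Rᵐᵒᵖ M₀) this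
  constructor
  · intro hE
    by_contra hcon
    push_neg at hcon
    obtain ⟨⟨u, hu0, hu1⟩, ⟨v, hv1, hv0⟩⟩ := hcon
    have huU : ¬ IsUnit u := fun h => hu1 ((key u).mp h).2
    have hvU : ¬ IsUnit v := fun h => hv0 ((key v).mp h).1
    have hsum : IsUnit (u + v) := by
      rw [key]
      constructor
      · by_contra h
        have : IsUnit ((u + v : MorphEnd μ) : Module.End Rᵐᵒᵖ M₀ × Module.End Rᵐᵒᵖ M₁).1 ∨
            IsUnit (-(v : Module.End Rᵐᵒᵖ M₀ × Module.End Rᵐᵒᵖ M₁).1) := by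
          apply myIsUnit_or_of_isUnit_add
          have heq : ((u + v : MorphEnd μ) : Module.End Rᵐᵒᵖ M₀ × Module.End Rᵐᵒᵖ M₁).1 +
              -(v : Module.End Rᵐᵒᵖ M₀ × Module.End Rᵐᵒᵖ M₁).1 =
              (u : Module.End Rᵐᵒᵖ M₀ × Module.End Rᵐᵒᵖ M₁).1 := by
            push_cast [Prod.fst_add, Prod.snd_add, Prod.fst_sub, Prod.snd_sub, Prod.fst_one, Prod.snd_one]; abel
          rw [heq]
          exact (Module.End.isUnit_iff _).mpr hu0
        rcases this with h' | h'
        · exact h ((Module.End.isUnit_iff _).mp h')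
        · exact hv0 ((Module.End.isUnit_iff _).mp (by simpa using h'))
      · by_contra h
        have : IsUnit ((u + v : MorphEnd μ) : Module.End Rᵐᵒᵖ M₀ × Module.End Rᵐᵒᵖ M₁).2 ∨
            IsUnit (-(u : Module.End Rᵐᵒᵖ M₀ × Module.End Rᵐᵒᵖ M₁).2) := by
          apply myIsUnit_or_of_isUnit_add
          have heq : ((u + v : MorphEnd μ) : Module.End Rᵐᵒᵖ M₀ × Module.End Rᵐᵒᵖ M₁).2 +
              -(u : Module.End Rᵐᵒᵖ M₀ × Module.End Rᵐᵒᵖ M₁).2 =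
              (v : Module.End Rᵐᵒᵖ M₀ × Module.End Rᵐᵒᵖ M₁).2 := by
            push_cast [Prod.fst_add, Prod.snd_add, Prod.fst_sub, Prod.snd_sub, Prod.fst_one, Prod.snd_one]; abel
          rw [heq]
          exact (Module.End.isUnit_iff _).mpr hv1
        rcases this with h' | h'
        · exact h ((Module.End.isUnit_iff _).mp h')
        · exact hu1 ((Module.End.isUnit_iff _).mp (by simpa using h'))
    rcases myIsUnit_or_of_isUnit_add hsum with h | h
    · exact huU h
    · exact hvU h
  · intro hc
    refine myOfIsUnit fun u => ?_
    rcases hc with hc | hc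
    · rcases myIsUnit_or_one_sub (u : Module.End Rᵐᵒᵖ M₀ × Module.End Rᵐᵒᵖ M₁).1 with h | h
      · left
        have hb0 := (Module.End.isUnit_iff _).mp h
        exact (key u).mpr ⟨hb0, hc u hb0⟩
      · right
        have h1 : ((1 - u : MorphEnd μ) : Module.End Rᵐᵒᵖ M₀ × Module.End Rᵐᵒᵖ M₁).1 =
            1 - (u : Module.End Rᵐᵒᵖ M₀ × Module.End Rᵐᵒᵖ M₁).1 := by push_cast [Prod.fst_add, Prod.snd_add, Prod.fst_sub, Prod.snd_sub, Prod.fst_one, Prod.snd_one]; abel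
        have hb0 : Function.Bijective
            ((1 - u : MorphEnd μ) : Module.End Rᵐᵒᵖ M₀ × Module.End Rᵐᵒᵖ M₁).1 := by
          rw [h1]; exact (Module.End.isUnit_iff _).mp h
        exact (key _).mpr ⟨hb0, hc _ hb0⟩
    · rcases myIsUnit_or_one_sub (u : Module.End Rᵐᵒᵖ M₀ × Module.End Rᵐᵒᵖ M₁).2 with h | h
      · left
        have hb1 := (Module.End.isUnit_iff _).mp h
        exact (key u).mpr ⟨hc u hb1, hb1⟩
      · right
        have h1 : ((1 - u : MorphEnd μ) : Module.End Rᵐᵒᵖ M₀ × Module.End Rᵐᵒᵖ M₁).2 =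
            1 - (u : Module.End Rᵐᵒᵖ M₀ × Module.End Rᵐᵒᵖ M₁).2 := by push_cast [Prod.fst_add, Prod.snd_add, Prod.fst_sub, Prod.snd_sub, Prod.fst_one, Prod.snd_one]; abel
        have hb1 : Function.Bijective
            ((1 - u : MorphEnd μ) : Module.End Rᵐᵒᵖ M₀ × Module.End Rᵐᵒᵖ M₁).2 := by
          rw [h1]; exact (Module.End.isUnit_iff _).mp h
        exact (key _).mpr ⟨hc _ hb1, hb1⟩
end

section
/- Let μ_M : M0 → M1 be an object of Morph(Mod-R) with M0 and M1 non-zero uniserial right R-modules. Then the endomorphism ring E_M of M in Morph(Mod-R) has at most four maximal right (equivalently, left) ideals, and every maximal right ideal of E_M is among the completely prime two-sided ideals I_0 := {(u0, u1) ∈ E_M : u0 is not injective}, I_1 := {(u0, u1) ∈ E_M : u1 is not injective}, K_0 := {(u0, u1) ∈ E_M : u0 is not surjective}, and K_1 := {(u0, u1) ∈ E_M : u1 is not surjective}. -/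
universe u

section UniLemmas

variable {R' M : Type*} [Ring R'] [AddCommGroup M] [Module R' M]

lemma exists_ker_ne_zero {f : Module.End R' M} (h : ¬ Function.Injective f) :
    ∃ c, f c = 0 ∧ c ≠ 0 := by
  rw [← LinearMap.ker_eq_bot] at h
  obtain ⟨c, hc, hc0⟩ := (Submodule.ne_bot_iff _).mp h
  exact ⟨c, LinearMap.mem_ker.mp hc, hc0⟩

lemma uni_add_inj (huni : ∀ A B : Submodule R' M, A ≤ B ∨ B ≤ A)
    {f g : Module.End R' M} (hf : Function.Injective f) (hg : ¬ Function.Injective g) :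
    Function.Injective (f + g) := by
  obtain ⟨c, hgc, hc⟩ := exists_ker_ne_zero hg
  rcases huni (LinearMap.ker (f + g)) (LinearMap.ker g) with h | h
  · rw [← LinearMap.ker_eq_bot]
    refine (Submodule.eq_bot_iff _).mpr fun x hx => ?_
    have hxg : g x = 0 := LinearMap.mem_ker.mp (h hx)
    have hxfg : f x + g x = 0 := by
      simpa [LinearMap.add_apply] using LinearMap.mem_ker.mp hx
    have hfx : f x = 0 := by rwa [hxg, add_zero] at hxfg
    exact hf (show f x = f 0 by simp [hfx])
  · exfalso
    have hcfg : (f + g) c = 0 := LinearMap.mem_ker.mp (h (LinearMap.mem_ker.mpr hgc))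
    have hfc : f c = 0 := by simpa [LinearMap.add_apply, hgc] using hcfg
    exact hc (hf (show f c = f 0 by simp [hfc]))

lemma uni_add_surj (huni : ∀ A B : Submodule R' M, A ≤ B ∨ B ≤ A)
    {f g : Module.End R' M} (hf : Function.Surjective f) (hg : ¬ Function.Surjective g) :
    Function.Surjective (f + g) := by
  rcases huni (LinearMap.range (f + g)) (LinearMap.range g) with h | h
  · exfalso
    apply hg
    intro m
    obtain ⟨x, hx⟩ := hf m
    obtain ⟨w, hw⟩ := LinearMap.mem_range.mp (h (LinearMap.mem_range.mpr ⟨x, rfl⟩))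
    refine ⟨w - x, ?_⟩
    rw [map_sub, hw]
    simp [LinearMap.add_apply, hx]
  · intro m
    obtain ⟨x, hx⟩ := hf m
    obtain ⟨w, hw⟩ := LinearMap.mem_range.mp (h (LinearMap.mem_range.mpr ⟨x, rfl⟩))
    refine ⟨x - w, ?_⟩
    rw [map_sub, hw]
    simp [LinearMap.add_apply, hx]

lemma uni_mul_notinj_left (huni : ∀ A B : Submodule R' M, A ≤ B ∨ B ≤ A) [Nontrivial M]
    {f : Module.End R' M} (hf : ¬ Function.Injective f) (g : Module.End R' M) :
    ¬ Function.Injective (f * g) := by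
  obtain ⟨c, hfc, hc⟩ := exists_ker_ne_zero hf
  rcases huni (LinearMap.range g) (LinearMap.ker f) with h | h
  · intro hinj
    obtain ⟨m, hm⟩ := exists_ne (0 : M)
    apply hm
    apply hinj
    have h1 : f (g m) = 0 := LinearMap.mem_ker.mp (h ⟨m, rfl⟩)
    simp [Module.End.mul_apply, h1]
  · intro hinj
    obtain ⟨y, hy⟩ := LinearMap.mem_range.mp (h (LinearMap.mem_ker.mpr hfc))
    apply hc
    have hy0 : y = 0 := by
      apply hinj
      simp [Module.End.mul_apply, hy, hfc]
    rw [← hy, hy0, map_zero]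

lemma mul_notinj_right {f g : Module.End R' M} (hg : ¬ Function.Injective g) :
    ¬ Function.Injective (f * g) := by
  obtain ⟨c, hgc, hc⟩ := exists_ker_ne_zero hg
  intro hinj
  apply hc
  apply hinj
  simp [Module.End.mul_apply, hgc]

lemma uni_mul_notsurj_right (huni : ∀ A B : Submodule R' M, A ≤ B ∨ B ≤ A) [Nontrivial M]
    (f : Module.End R' M) {g : Module.End R' M} (hg : ¬ Function.Surjective g) :
    ¬ Function.Surjective (f * g) := by
  intro hs
  rcases huni (LinearMap.range g) (LinearMap.ker f) with h | h
  · obtain ⟨m, hm⟩ := exists_ne (0 : M)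
    obtain ⟨x, hx⟩ := hs m
    apply hm
    rw [← hx, Module.End.mul_apply]
    exact LinearMap.mem_ker.mp (h ⟨x, rfl⟩)
  · apply hg
    intro z
    obtain ⟨x, hx⟩ := hs (f z)
    have hker : z - g x ∈ LinearMap.ker f := by
      rw [LinearMap.mem_ker, map_sub, sub_eq_zero]
      rw [Module.End.mul_apply] at hx
      exact hx.symm
    obtain ⟨w, hw⟩ := LinearMap.mem_range.mp (h hker)
    refine ⟨x + w, ?_⟩
    rw [map_add, hw]
    abel

lemma mul_notsurj_left {f : Module.End R' M} (hf : ¬ Function.Surjective f)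
    (g : Module.End R' M) : ¬ Function.Surjective (f * g) := by
  intro hs
  apply hf
  intro m
  obtain ⟨x, hx⟩ := hs m
  exact ⟨g x, by rw [Module.End.mul_apply] at hx; exact hx⟩

end UniLemmas

section Helpers

variable {A' : Type*} [Ring A']

lemma cp_helper (G : A' → Prop) (h1 : G 1) (h0 : ¬ G 0)
    (hmul : ∀ x y : A', G x → G y → G (x * y))
    (hmul' : ∀ x y : A', G (x * y) → G x ∧ G y)
    (hadd : ∀ x y : A', G x → ¬ G y → G (x + y))
    (hneg : ∀ x : A', G x → G (-x)) :
    IsCompletelyPrimeIdealSet {a : A' | ¬ G a} := by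
  refine ⟨⟨⟨h0, ?_, ?_, ?_⟩, ?_⟩, ?_, ?_⟩
  · intro x hx y hy hxy
    exact hx ((show G ((x + y) + -y) → _ by rw [add_neg_cancel_right]; exact id)
      (hadd _ _ hxy (fun hGy => hy (by simpa using hneg _ hGy))))
  · intro x hx a hxa
    exact hx (hmul' x a hxa).1
  · intro x hx
    exact fun hGx => hx (by simpa using hneg _ hGx)
  · intro x hx a hax
    exact hx (hmul' a x hax).2
  · intro h
    have h1' : (1 : A') ∈ {a : A' | ¬ G a} := h ▸ Set.mem_univ 1
    exact h1' h1
  · intro x y hxy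
    by_contra hc
    push_neg at hc
    obtain ⟨hx, hy⟩ := hc
    simp only [Set.mem_setOf_eq, not_not] at hx hy
    exact hxy (hmul x y hx hy)

lemma avoid2 {P Q1 Q2 : Set A'}
    (hPadd : ∀ x ∈ P, ∀ y ∈ P, x + y ∈ P)
    (h1 : IsCompletelyPrimeIdealSet Q1) (h2 : IsCompletelyPrimeIdealSet Q2)
    (hcov : ∀ x ∈ P, x ∈ Q1 ∨ x ∈ Q2) : P ⊆ Q1 ∨ P ⊆ Q2 := by
  by_contra hc
  push_neg at hc
  obtain ⟨hn1, hn2⟩ := hc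
  rw [Set.not_subset] at hn1 hn2
  obtain ⟨a, haP, haQ1⟩ := hn1
  obtain ⟨b, hbP, hbQ2⟩ := hn2
  have haQ2 : a ∈ Q2 := (hcov a haP).resolve_left haQ1
  have hbQ1 : b ∈ Q1 := (hcov b hbP).resolve_right hbQ2
  rcases hcov _ (hPadd a haP b hbP) with h | h
  · apply haQ1
    have := h1.1.1.2.1 _ h _ (h1.1.1.2.2.2 _ hbQ1)
    rwa [add_neg_cancel_right] at this
  · apply hbQ2
    have := h2.1.1.2.1 _ h _ (h2.1.1.2.2.2 _ haQ2)
    rwa [show a + b + -a = b by abel] at this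

lemma avoid3 {P Q1 Q2 Q3 : Set A'}
    (hPadd : ∀ x ∈ P, ∀ y ∈ P, x + y ∈ P)
    (hPmul : ∀ x ∈ P, ∀ y ∈ P, x * y ∈ P)
    (h1 : IsCompletelyPrimeIdealSet Q1) (h2 : IsCompletelyPrimeIdealSet Q2)
    (h3 : IsCompletelyPrimeIdealSet Q3)
    (hcov : ∀ x ∈ P, x ∈ Q1 ∨ x ∈ Q2 ∨ x ∈ Q3) : P ⊆ Q1 ∨ P ⊆ Q2 ∨ P ⊆ Q3 := by
  by_contra hc
  push_neg at hc
  obtain ⟨hn1, hn2, hn3⟩ := hc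
  have H1 : ∃ x ∈ P, x ∉ Q2 ∧ x ∉ Q3 := by
    by_contra hA
    push_neg at hA
    have := avoid2 hPadd h2 h3 (fun x hx => by
      by_cases h : x ∈ Q2
      · exact Or.inl h
      · exact Or.inr (hA x hx h))
    rcases this with h | h
    exacts [hn2 h, hn3 h]
  have H2 : ∃ x ∈ P, x ∉ Q1 ∧ x ∉ Q3 := by
    by_contra hA
    push_neg at hA
    have := avoid2 hPadd h1 h3 (fun x hx => by
      by_cases h : x ∈ Q1
      · exact Or.inl h
      · exact Or.inr (hA x hx h))
    rcases this with h | h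
    exacts [hn1 h, hn3 h]
  have H3 : ∃ x ∈ P, x ∉ Q1 ∧ x ∉ Q2 := by
    by_contra hA
    push_neg at hA
    have := avoid2 hPadd h1 h2 (fun x hx => by
      by_cases h : x ∈ Q1
      · exact Or.inl h
      · exact Or.inr (hA x hx h))
    rcases this with h | h
    exacts [hn1 h, hn2 h]
  obtain ⟨x1, hx1P, hx1Q2, hx1Q3⟩ := H1
  obtain ⟨x2, hx2P, hx2Q1, hx2Q3⟩ := H2
  obtain ⟨x3, hx3P, hx3Q1, hx3Q2⟩ := H3
  have hx1Q1 : x1 ∈ Q1 := by rcases hcov _ hx1P with h | h | h <;> tauto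
  have hx2Q2 : x2 ∈ Q2 := by rcases hcov _ hx2P with h | h | h <;> tauto
  have hx3Q3 : x3 ∈ Q3 := by rcases hcov _ hx3P with h | h | h <;> tauto
  have hyP : x1 + x2 * x3 ∈ P := hPadd _ hx1P _ (hPmul _ hx2P _ hx3P)
  rcases hcov _ hyP with h | h | h
  · have hm : x2 * x3 ∈ Q1 := by
      have := h1.1.1.2.1 _ h _ (h1.1.1.2.2.2 _ hx1Q1)
      rwa [show x1 + x2 * x3 + -x1 = x2 * x3 by abel] at this
    rcases h1.2.2 _ _ hm with hh | hh
    exacts [hx2Q1 hh, hx3Q1 hh]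
  · have hm : x2 * x3 ∈ Q2 := h2.1.1.2.2.1 _ hx2Q2 x3
    have := h2.1.1.2.1 _ h _ (h2.1.1.2.2.2 _ hm)
    rw [show x1 + x2 * x3 + -(x2 * x3) = x1 by abel] at this
    exact hx1Q2 this
  · have hm : x2 * x3 ∈ Q3 := h3.1.2 _ hx3Q3 x2
    have := h3.1.1.2.1 _ h _ (h3.1.1.2.2.2 _ hm)
    rw [show x1 + x2 * x3 + -(x2 * x3) = x1 by abel] at this
    exact hx1Q3 this

lemma avoid4 {P Q1 Q2 Q3 Q4 : Set A'}
    (hPadd : ∀ x ∈ P, ∀ y ∈ P, x + y ∈ P)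
    (hPmul : ∀ x ∈ P, ∀ y ∈ P, x * y ∈ P)
    (h1 : IsCompletelyPrimeIdealSet Q1) (h2 : IsCompletelyPrimeIdealSet Q2)
    (h3 : IsCompletelyPrimeIdealSet Q3) (h4 : IsCompletelyPrimeIdealSet Q4)
    (hcov : ∀ x ∈ P, x ∈ Q1 ∨ x ∈ Q2 ∨ x ∈ Q3 ∨ x ∈ Q4) :
    P ⊆ Q1 ∨ P ⊆ Q2 ∨ P ⊆ Q3 ∨ P ⊆ Q4 := by
  by_contra hc
  push_neg at hc
  obtain ⟨hn1, hn2, hn3, hn4⟩ := hc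
  have pick : ∀ Qa Qb Qc : Set A', IsCompletelyPrimeIdealSet Qa →
      IsCompletelyPrimeIdealSet Qb → IsCompletelyPrimeIdealSet Qc →
      ¬ P ⊆ Qa → ¬ P ⊆ Qb → ¬ P ⊆ Qc →
      ∃ x ∈ P, x ∉ Qa ∧ x ∉ Qb ∧ x ∉ Qc := by
    intro Qa Qb Qc ha hb hcp hna hnb hnc
    by_contra hA
    push_neg at hA
    have := avoid3 hPadd hPmul ha hb hcp (fun x hx => by
      by_cases h : x ∈ Qa
      · exact Or.inl h
      by_cases h' : x ∈ Qb
      · exact Or.inr (Or.inl h')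
      · exact Or.inr (Or.inr (hA x hx h h')))
    rcases this with h | h | h
    exacts [hna h, hnb h, hnc h]
  obtain ⟨x1, hx1P, hx1Q2, hx1Q3, hx1Q4⟩ := pick Q2 Q3 Q4 h2 h3 h4 hn2 hn3 hn4
  obtain ⟨x2, hx2P, hx2Q1, hx2Q3, hx2Q4⟩ := pick Q1 Q3 Q4 h1 h3 h4 hn1 hn3 hn4
  obtain ⟨x3, hx3P, hx3Q1, hx3Q2, hx3Q4⟩ := pick Q1 Q2 Q4 h1 h2 h4 hn1 hn2 hn4
  obtain ⟨x4, hx4P, hx4Q1, hx4Q2, hx4Q3⟩ := pick Q1 Q2 Q3 h1 h2 h3 hn1 hn2 hn3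
  have hx1Q1 : x1 ∈ Q1 := by rcases hcov _ hx1P with h | h | h | h <;> tauto
  have hx2Q2 : x2 ∈ Q2 := by rcases hcov _ hx2P with h | h | h | h <;> tauto
  have hx3Q3 : x3 ∈ Q3 := by rcases hcov _ hx3P with h | h | h | h <;> tauto
  have hx4Q4 : x4 ∈ Q4 := by rcases hcov _ hx4P with h | h | h | h <;> tauto
  have hyP : x1 + x2 * (x3 * x4) ∈ P :=
    hPadd _ hx1P _ (hPmul _ hx2P _ (hPmul _ hx3P _ hx4P))
  rcases hcov _ hyP with h | h | h | h
  · have hm : x2 * (x3 * x4) ∈ Q1 := by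
      have := h1.1.1.2.1 _ h _ (h1.1.1.2.2.2 _ hx1Q1)
      rwa [show x1 + x2 * (x3 * x4) + -x1 = x2 * (x3 * x4) by abel] at this
    rcases h1.2.2 _ _ hm with hh | hh
    · exact hx2Q1 hh
    rcases h1.2.2 _ _ hh with hh' | hh'
    exacts [hx3Q1 hh', hx4Q1 hh']
  · have hm : x2 * (x3 * x4) ∈ Q2 := h2.1.1.2.2.1 _ hx2Q2 _
    have := h2.1.1.2.1 _ h _ (h2.1.1.2.2.2 _ hm)
    rw [show x1 + x2 * (x3 * x4) + -(x2 * (x3 * x4)) = x1 by abel] at this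
    exact hx1Q2 this
  · have hm : x2 * (x3 * x4) ∈ Q3 := h3.1.2 _ (h3.1.1.2.2.1 _ hx3Q3 x4) x2
    have := h3.1.1.2.1 _ h _ (h3.1.1.2.2.2 _ hm)
    rw [show x1 + x2 * (x3 * x4) + -(x2 * (x3 * x4)) = x1 by abel] at this
    exact hx1Q3 this
  · have hm : x2 * (x3 * x4) ∈ Q4 := h4.1.2 _ (h4.1.2 _ hx4Q4 x3) x2
    have := h4.1.1.2.1 _ h _ (h4.1.1.2.2.2 _ hm)
    rw [show x1 + x2 * (x3 * x4) + -(x2 * (x3 * x4)) = x1 by abel] at this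
    exact hx1Q4 this

end Helpers

section Units

variable {A : Type u} [Ring A] {M₀ M₁ : Type u} [AddCommGroup M₀] [AddCommGroup M₁]
    [Module A M₀] [Module A M₁] (μ : M₀ →ₗ[A] M₁)

lemma morphEnd_unit (u : MorphEnd μ)
    (h0 : Function.Bijective (u : Module.End A M₀ × Module.End A M₁).1)
    (h1 : Function.Bijective (u : Module.End A M₀ × Module.End A M₁).2) :
    ∃ v : MorphEnd μ, u * v = 1 ∧ v * u = 1 := by
  set u0 : Module.End A M₀ := (u : Module.End A M₀ × Module.End A M₁).1 with hu0
  set u1 : Module.End A M₁ := (u : Module.End A M₀ × Module.End A M₁).2 with hu1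
  have hu : ∀ x, u1 (μ x) = μ (u0 x) := u.2
  let e₀ := LinearEquiv.ofBijective u0 h0
  let e₁ := LinearEquiv.ofBijective u1 h1
  have hmem : ((e₀.symm : Module.End A M₀), (e₁.symm : Module.End A M₁)) ∈ MorphEnd μ := by
    intro x
    show e₁.symm (μ x) = μ (e₀.symm x)
    apply e₁.injective
    rw [e₁.apply_symm_apply]
    have heq : e₁ (μ (e₀.symm x)) = u1 (μ (e₀.symm x)) := rfl
    rw [heq, hu, show u0 (e₀.symm x) = e₀ (e₀.symm x) from rfl, e₀.apply_symm_apply]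
  refine ⟨⟨_, hmem⟩, ?_, ?_⟩
  · apply Subtype.ext
    apply Prod.ext
    · show u0 * (e₀.symm : Module.End A M₀) = 1
      apply LinearMap.ext
      intro x
      show u0 (e₀.symm x) = x
      rw [show u0 (e₀.symm x) = e₀ (e₀.symm x) from rfl, e₀.apply_symm_apply]
    · show u1 * (e₁.symm : Module.End A M₁) = 1
      apply LinearMap.ext
      intro x
      show u1 (e₁.symm x) = x
      rw [show u1 (e₁.symm x) = e₁ (e₁.symm x) from rfl, e₁.apply_symm_apply]
  · apply Subtype.ext
    apply Prod.ext
    · show (e₀.symm : Module.End A M₀) * u0 = 1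
      apply LinearMap.ext
      intro x
      show e₀.symm (u0 x) = x
      rw [show u0 x = e₀ x from rfl, e₀.symm_apply_apply]
    · show (e₁.symm : Module.End A M₁) * u1 = 1
      apply LinearMap.ext
      intro x
      show e₁.symm (u1 x) = x
      rw [show u1 x = e₁ x from rfl, e₁.symm_apply_apply]

end Units

/-- Let `μ : M₀ → M₁` be an object of `Morph(Mod-R)` with `M₀`, `M₁`
non-zero uniserial right `R`-modules. Then `E_M` has at most four maximal right
(respectively, left) ideals: every maximal right (left) ideal of `E_M` is among the
completely prime two-sided ideals
`I₀ = {(u₀,u₁) ∈ E_M : u₀ not injective}`, `I₁ = {(u₀,u₁) : u₁ not injective}`,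
`K₀ = {(u₀,u₁) : u₀ not surjective}` and `K₁ = {(u₀,u₁) : u₁ not surjective}`. -/
theorem morphEnd_uniserial_max_ideals (R : Type u) [Ring R] (M₀ M₁ : Type u)
    [AddCommGroup M₀] [AddCommGroup M₁] [Module Rᵐᵒᵖ M₀] [Module Rᵐᵒᵖ M₁]
    [Nontrivial M₀] [Nontrivial M₁]
    (huni₀ : ∀ A B : Submodule Rᵐᵒᵖ M₀, A ≤ B ∨ B ≤ A)
    (huni₁ : ∀ A B : Submodule Rᵐᵒᵖ M₁, A ≤ B ∨ B ≤ A)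
    (μ : M₀ →ₗ[Rᵐᵒᵖ] M₁) :
    (IsCompletelyPrimeIdealSet {u : MorphEnd μ |
        ¬ Function.Injective (u : Module.End Rᵐᵒᵖ M₀ × Module.End Rᵐᵒᵖ M₁).1}) ∧
    (IsCompletelyPrimeIdealSet {u : MorphEnd μ |
        ¬ Function.Injective (u : Module.End Rᵐᵒᵖ M₀ × Module.End Rᵐᵒᵖ M₁).2}) ∧
    (IsCompletelyPrimeIdealSet {u : MorphEnd μ |
        ¬ Function.Surjective (u : Module.End Rᵐᵒᵖ M₀ × Module.End Rᵐᵒᵖ M₁).1}) ∧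
    (IsCompletelyPrimeIdealSet {u : MorphEnd μ |
        ¬ Function.Surjective (u : Module.End Rᵐᵒᵖ M₀ × Module.End Rᵐᵒᵖ M₁).2}) ∧
    (∀ P : Set (MorphEnd μ), IsMaxRightIdealSet P →
      P = {u : MorphEnd μ |
          ¬ Function.Injective (u : Module.End Rᵐᵒᵖ M₀ × Module.End Rᵐᵒᵖ M₁).1} ∨
      P = {u : MorphEnd μ |
          ¬ Function.Injective (u : Module.End Rᵐᵒᵖ M₀ × Module.End Rᵐᵒᵖ M₁).2} ∨
      P = {u : MorphEnd μ |
          ¬ Function.Surjective (u : Module.End Rᵐᵒᵖ M₀ × Module.End Rᵐᵒᵖ M₁).1} ∨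
      P = {u : MorphEnd μ |
          ¬ Function.Surjective (u : Module.End Rᵐᵒᵖ M₀ × Module.End Rᵐᵒᵖ M₁).2}) ∧
    (∀ P : Set (MorphEnd μ), IsMaxLeftIdealSet P →
      P = {u : MorphEnd μ |
          ¬ Function.Injective (u : Module.End Rᵐᵒᵖ M₀ × Module.End Rᵐᵒᵖ M₁).1} ∨
      P = {u : MorphEnd μ |
          ¬ Function.Injective (u : Module.End Rᵐᵒᵖ M₀ × Module.End Rᵐᵒᵖ M₁).2} ∨
      P = {u : MorphEnd μ |
          ¬ Function.Surjective (u : Module.End Rᵐᵒᵖ M₀ × Module.End Rᵐᵒᵖ M₁).1} ∨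
      P = {u : MorphEnd μ |
          ¬ Function.Surjective (u : Module.End Rᵐᵒᵖ M₀ × Module.End Rᵐᵒᵖ M₁).2}) := by
  classical
  have hcp1 : IsCompletelyPrimeIdealSet {u : MorphEnd μ |
      ¬ Function.Injective (u : Module.End Rᵐᵒᵖ M₀ × Module.End Rᵐᵒᵖ M₁).1} := by
    apply cp_helper (fun u : MorphEnd μ =>
      Function.Injective (u : Module.End Rᵐᵒᵖ M₀ × Module.End Rᵐᵒᵖ M₁).1)
    · exact fun a b h => h
    · intro h
      obtain ⟨m, hm⟩ := exists_ne (0 : M₀)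
      exact hm (h (show ((0 : MorphEnd μ) : Module.End Rᵐᵒᵖ M₀ × Module.End Rᵐᵒᵖ M₁).1 m
        = ((0 : MorphEnd μ) : Module.End Rᵐᵒᵖ M₀ × Module.End Rᵐᵒᵖ M₁).1 0 by simp))
    · intro x y hx hy
      show Function.Injective ((x : Module.End Rᵐᵒᵖ M₀ × Module.End Rᵐᵒᵖ M₁).1
        * (y : Module.End Rᵐᵒᵖ M₀ × Module.End Rᵐᵒᵖ M₁).1)
      have h' := hx.comp hy
      rwa [← Module.End.coe_mul] at h'
    · intro x y h
      have h' : Function.Injective ((x : Module.End Rᵐᵒᵖ M₀ × Module.End Rᵐᵒᵖ M₁).1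
          * (y : Module.End Rᵐᵒᵖ M₀ × Module.End Rᵐᵒᵖ M₁).1) := h
      constructor
      · by_contra hn
        exact uni_mul_notinj_left huni₀ hn _ h'
      · by_contra hn
        exact mul_notinj_right hn h'
    · intro x y hx hy
      exact uni_add_inj huni₀ hx hy
    · intro x hx
      show Function.Injective (-(x : Module.End Rᵐᵒᵖ M₀ × Module.End Rᵐᵒᵖ M₁).1)
      intro a b hab
      apply hx
      rw [LinearMap.neg_apply, LinearMap.neg_apply, neg_inj] at hab
      exact hab
  have hcp2 : IsCompletelyPrimeIdealSet {u : MorphEnd μ |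
      ¬ Function.Injective (u : Module.End Rᵐᵒᵖ M₀ × Module.End Rᵐᵒᵖ M₁).2} := by
    apply cp_helper (fun u : MorphEnd μ =>
      Function.Injective (u : Module.End Rᵐᵒᵖ M₀ × Module.End Rᵐᵒᵖ M₁).2)
    · exact fun a b h => h
    · intro h
      obtain ⟨m, hm⟩ := exists_ne (0 : M₁)
      exact hm (h (show ((0 : MorphEnd μ) : Module.End Rᵐᵒᵖ M₀ × Module.End Rᵐᵒᵖ M₁).2 m
        = ((0 : MorphEnd μ) : Module.End Rᵐᵒᵖ M₀ × Module.End Rᵐᵒᵖ M₁).2 0 by simp))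
    · intro x y hx hy
      show Function.Injective ((x : Module.End Rᵐᵒᵖ M₀ × Module.End Rᵐᵒᵖ M₁).2
        * (y : Module.End Rᵐᵒᵖ M₀ × Module.End Rᵐᵒᵖ M₁).2)
      have h' := hx.comp hy
      rwa [← Module.End.coe_mul] at h'
    · intro x y h
      have h' : Function.Injective ((x : Module.End Rᵐᵒᵖ M₀ × Module.End Rᵐᵒᵖ M₁).2
          * (y : Module.End Rᵐᵒᵖ M₀ × Module.End Rᵐᵒᵖ M₁).2) := h
      constructor
      · by_contra hn
        exact uni_mul_notinj_left huni₁ hn _ h'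
      · by_contra hn
        exact mul_notinj_right hn h'
    · intro x y hx hy
      exact uni_add_inj huni₁ hx hy
    · intro x hx
      show Function.Injective (-(x : Module.End Rᵐᵒᵖ M₀ × Module.End Rᵐᵒᵖ M₁).2)
      intro a b hab
      apply hx
      rw [LinearMap.neg_apply, LinearMap.neg_apply, neg_inj] at hab
      exact hab
  have hcp3 : IsCompletelyPrimeIdealSet {u : MorphEnd μ |
      ¬ Function.Surjective (u : Module.End Rᵐᵒᵖ M₀ × Module.End Rᵐᵒᵖ M₁).1} := by
    apply cp_helper (fun u : MorphEnd μ =>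
      Function.Surjective (u : Module.End Rᵐᵒᵖ M₀ × Module.End Rᵐᵒᵖ M₁).1)
    · exact fun a => ⟨a, rfl⟩
    · intro h
      obtain ⟨m, hm⟩ := exists_ne (0 : M₀)
      obtain ⟨x, hx⟩ := h m
      apply hm
      rw [← hx]
      simp
    · intro x y hx hy
      show Function.Surjective ((x : Module.End Rᵐᵒᵖ M₀ × Module.End Rᵐᵒᵖ M₁).1
        * (y : Module.End Rᵐᵒᵖ M₀ × Module.End Rᵐᵒᵖ M₁).1)
      have h' := hx.comp hy
      rwa [← Module.End.coe_mul] at h'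
    · intro x y h
      have h' : Function.Surjective ((x : Module.End Rᵐᵒᵖ M₀ × Module.End Rᵐᵒᵖ M₁).1
          * (y : Module.End Rᵐᵒᵖ M₀ × Module.End Rᵐᵒᵖ M₁).1) := h
      constructor
      · by_contra hn
        exact mul_notsurj_left hn _ h'
      · by_contra hn
        exact uni_mul_notsurj_right huni₀ _ hn h'
    · intro x y hx hy
      exact uni_add_surj huni₀ hx hy
    · intro x hx
      show Function.Surjective (-(x : Module.End Rᵐᵒᵖ M₀ × Module.End Rᵐᵒᵖ M₁).1)
      intro m
      obtain ⟨a, ha⟩ := hx m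
      exact ⟨-a, by simp [ha]⟩
  have hcp4 : IsCompletelyPrimeIdealSet {u : MorphEnd μ |
      ¬ Function.Surjective (u : Module.End Rᵐᵒᵖ M₀ × Module.End Rᵐᵒᵖ M₁).2} := by
    apply cp_helper (fun u : MorphEnd μ =>
      Function.Surjective (u : Module.End Rᵐᵒᵖ M₀ × Module.End Rᵐᵒᵖ M₁).2)
    · exact fun a => ⟨a, rfl⟩
    · intro h
      obtain ⟨m, hm⟩ := exists_ne (0 : M₁)
      obtain ⟨x, hx⟩ := h m
      apply hm
      rw [← hx]
      simp
    · intro x y hx hy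
      show Function.Surjective ((x : Module.End Rᵐᵒᵖ M₀ × Module.End Rᵐᵒᵖ M₁).2
        * (y : Module.End Rᵐᵒᵖ M₀ × Module.End Rᵐᵒᵖ M₁).2)
      have h' := hx.comp hy
      rwa [← Module.End.coe_mul] at h'
    · intro x y h
      have h' : Function.Surjective ((x : Module.End Rᵐᵒᵖ M₀ × Module.End Rᵐᵒᵖ M₁).2
          * (y : Module.End Rᵐᵒᵖ M₀ × Module.End Rᵐᵒᵖ M₁).2) := h
      constructor
      · by_contra hn
        exact mul_notsurj_left hn _ h'
      · by_contra hn
        exact uni_mul_notsurj_right huni₁ _ hn h'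
    · intro x y hx hy
      exact uni_add_surj huni₁ hx hy
    · intro x hx
      show Function.Surjective (-(x : Module.End Rᵐᵒᵖ M₀ × Module.End Rᵐᵒᵖ M₁).2)
      intro m
      obtain ⟨a, ha⟩ := hx m
      exact ⟨-a, by simp [ha]⟩
  refine ⟨hcp1, hcp2, hcp3, hcp4, ?_, ?_⟩
  · intro P hP
    obtain ⟨hPr, hPne, hPmax⟩ := hP
    have hPadd := hPr.2.1
    have hPmul : ∀ x ∈ P, ∀ y ∈ P, x * y ∈ P := fun x hx y _ => hPr.2.2.1 x hx y
    have hcov : ∀ u ∈ P, u ∈ {u : MorphEnd μ |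
        ¬ Function.Injective (u : Module.End Rᵐᵒᵖ M₀ × Module.End Rᵐᵒᵖ M₁).1} ∨
        u ∈ {u : MorphEnd μ |
        ¬ Function.Injective (u : Module.End Rᵐᵒᵖ M₀ × Module.End Rᵐᵒᵖ M₁).2} ∨
        u ∈ {u : MorphEnd μ |
        ¬ Function.Surjective (u : Module.End Rᵐᵒᵖ M₀ × Module.End Rᵐᵒᵖ M₁).1} ∨
        u ∈ {u : MorphEnd μ |
        ¬ Function.Surjective (u : Module.End Rᵐᵒᵖ M₀ × Module.End Rᵐᵒᵖ M₁).2} := by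
      intro u huP
      by_contra hcn
      push_neg at hcn
      obtain ⟨g1, g2, g3, g4⟩ := hcn
      simp only [Set.mem_setOf_eq, not_not] at g1 g2 g3 g4
      obtain ⟨v, huv, hvu⟩ := morphEnd_unit μ u ⟨g1, g3⟩ ⟨g2, g4⟩
      apply hPne
      apply Set.eq_univ_of_forall
      intro a
      have h1P : (1 : MorphEnd μ) ∈ P := by rw [← huv]; exact hPr.2.2.1 u huP v
      have := hPr.2.2.1 1 h1P a
      rwa [one_mul] at this
    rcases avoid4 hPadd hPmul hcp1 hcp2 hcp3 hcp4 hcov with h | h | h | h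
    · exact Or.inl (hPmax _ hcp1.1.1 h hcp1.2.1).symm
    · exact Or.inr (Or.inl (hPmax _ hcp2.1.1 h hcp2.2.1).symm)
    · exact Or.inr (Or.inr (Or.inl (hPmax _ hcp3.1.1 h hcp3.2.1).symm))
    · exact Or.inr (Or.inr (Or.inr (hPmax _ hcp4.1.1 h hcp4.2.1).symm))
  · intro P hP
    obtain ⟨hPl, hPne, hPmax⟩ := hP
    have hPadd := hPl.2.1
    have hPmul : ∀ x ∈ P, ∀ y ∈ P, x * y ∈ P := fun x _ y hy => hPl.2.2.1 y hy x
    have hcov : ∀ u ∈ P, u ∈ {u : MorphEnd μ |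
        ¬ Function.Injective (u : Module.End Rᵐᵒᵖ M₀ × Module.End Rᵐᵒᵖ M₁).1} ∨
        u ∈ {u : MorphEnd μ |
        ¬ Function.Injective (u : Module.End Rᵐᵒᵖ M₀ × Module.End Rᵐᵒᵖ M₁).2} ∨
        u ∈ {u : MorphEnd μ |
        ¬ Function.Surjective (u : Module.End Rᵐᵒᵖ M₀ × Module.End Rᵐᵒᵖ M₁).1} ∨
        u ∈ {u : MorphEnd μ |
        ¬ Function.Surjective (u : Module.End Rᵐᵒᵖ M₀ × Module.End Rᵐᵒᵖ M₁).2} := by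
      intro u huP
      by_contra hcn
      push_neg at hcn
      obtain ⟨g1, g2, g3, g4⟩ := hcn
      simp only [Set.mem_setOf_eq, not_not] at g1 g2 g3 g4
      obtain ⟨v, huv, hvu⟩ := morphEnd_unit μ u ⟨g1, g3⟩ ⟨g2, g4⟩
      apply hPne
      apply Set.eq_univ_of_forall
      intro a
      have h1P : (1 : MorphEnd μ) ∈ P := by rw [← hvu]; exact hPl.2.2.1 u huP v
      have := hPl.2.2.1 1 h1P a
      rwa [mul_one] at this
    have hleft : ∀ Q : Set (MorphEnd μ), IsCompletelyPrimeIdealSet Q → IsLeftIdealSet Q :=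
      fun Q hQ => ⟨hQ.1.1.1, hQ.1.1.2.1, hQ.1.2, hQ.1.1.2.2.2⟩
    rcases avoid4 hPadd hPmul hcp1 hcp2 hcp3 hcp4 hcov with h | h | h | h
    · exact Or.inl (hPmax _ (hleft _ hcp1) h hcp1.2.1).symm
    · exact Or.inr (Or.inl (hPmax _ (hleft _ hcp2) h hcp2.2.1).symm)
    · exact Or.inr (Or.inr (Or.inl (hPmax _ (hleft _ hcp3) h hcp3.2.1).symm))
    · exact Or.inr (Or.inr (Or.inr (hPmax _ (hleft _ hcp4) h hcp4.2.1).symm))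
end
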